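/- arXiv:2603.11972 — 7 statements merged into one kernel-verified Lean document; each statement's English description precedes it below -/
import Mathlib

section
/- Call σ : ℝ → ℝ a Tauber–Wiener function if for every closed interval [a,b] the linear span of {t ↦ σ(w·t − θ) : w, θ ∈ ℝ} is dense in C([a,b], ℝ) with the sup norm. Let X be a Hausdorff locally convex space, σ a continuous Tauber–Wiener function, K ⊆ X compact, g ∈ C(K, ℝ), and ε > 0. Then there exist N ≥ 1, continuous linear functionals f₁, …, f_N ∈ X*, and real numbers c₁, …, c_N, θ₁, …, θ_N such that sup_{x∈K} |g(x) − Σᵢ cᵢ σ(fᵢ(x) − θᵢ)| < ε. -/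
/-- `σ` is a Tauber–Wiener function: for every closed interval `[a, b]`, the linear span of
`{t ↦ σ (w * t - θ) : w, θ ∈ ℝ}` is dense in `C([a, b], ℝ)` with the sup norm. -/
def TauberWiener (σ : ℝ → ℝ) : Prop :=
  ∀ (a b : ℝ) (g : ℝ → ℝ), ContinuousOn g (Set.Icc a b) →
    ∀ ε > 0, ∃ (N : ℕ) (c w θ : Fin N → ℝ),
      ∀ t ∈ Set.Icc a b, |g t - ∑ i, c i * σ (w i * t - θ i)| < ε

/-- Universal approximation by single-hidden-layer topological neural networks on a
Hausdorff locally convex space. -/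
theorem topological_network_dense
    {X : Type*} [AddCommGroup X] [Module ℝ X] [TopologicalSpace X]
    [IsTopologicalAddGroup X] [ContinuousSMul ℝ X] [LocallyConvexSpace ℝ X] [T2Space X]
    (σ : ℝ → ℝ) (hσcont : Continuous σ) (hσ : TauberWiener σ)
    (K : Set X) (hK : IsCompact K)
    (g : X → ℝ) (hg : ContinuousOn g K) (ε : ℝ) (hε : 0 < ε) :
    ∃ (N : ℕ), 1 ≤ N ∧ ∃ (f : Fin N → X →L[ℝ] ℝ) (c θ : Fin N → ℝ),
      ∀ x ∈ K, |g x - ∑ i, c i * σ (f i x - θ i)| < ε := by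
  suffices H : ∃ (N : ℕ) (f : Fin N → X →L[ℝ] ℝ) (c θ : Fin N → ℝ),
      ∀ x ∈ K, |g x - ∑ i, c i * σ (f i x - θ i)| < ε by
    obtain ⟨N, f, c, θ, hh⟩ := H
    match N, f, c, θ, hh with
    | 0, f, c, θ, hh =>
      exact ⟨1, le_refl 1, 0, 0, 0, fun x hx => by simpa using hh x hx⟩
    | (N+1), f, c, θ, hh =>
      exact ⟨N + 1, Nat.succ_le_succ (Nat.zero_le _), f, c, θ, hh⟩
  haveI : CompactSpace K := isCompact_iff_compactSpace.mp hK
  -- the set of exponentials of continuous linear functionals, restricted to K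
  let S : Set C(K, ℝ) := {e | ∃ h : X →L[ℝ] ℝ, e = ⟨fun x => Real.exp (h x),
    Real.continuous_exp.comp (h.continuous.comp continuous_subtype_val)⟩}
  have h1 : (1 : C(K, ℝ)) ∈ Submodule.span ℝ S :=
    Submodule.subset_span ⟨0, by ext x; simp⟩
  have hmulS : ∀ x y, x ∈ Submodule.span ℝ S → y ∈ Submodule.span ℝ S →
      x * y ∈ Submodule.span ℝ S := by
    intro x y hx hy
    have hxy : x * y ∈ Submodule.span ℝ S * Submodule.span ℝ S := Submodule.mul_mem_mul hx hy
    rw [Submodule.span_mul_span] at hxy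
    refine Submodule.span_le.mpr ?_ hxy
    rintro _ ⟨a, ha, b, hb, rfl⟩
    obtain ⟨ha', rfl⟩ := ha
    obtain ⟨hb', rfl⟩ := hb
    exact Submodule.subset_span ⟨ha' + hb', by ext x; simp [Real.exp_add]⟩
  let A : Subalgebra ℝ C(K, ℝ) := (Submodule.span ℝ S).toSubalgebra h1 hmulS
  have sep : A.SeparatesPoints := by
    intro x y hxy
    obtain ⟨h, hlt⟩ := geometric_hahn_banach_point_point
      (Subtype.coe_injective.ne hxy : (x : X) ≠ (y : X))
    refine ⟨_, ⟨(⟨fun x => Real.exp (h x),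
      Real.continuous_exp.comp (h.continuous.comp continuous_subtype_val)⟩ : C(K, ℝ)),
      Submodule.subset_span ⟨h, rfl⟩, rfl⟩, ?_⟩
    exact ne_of_lt (Real.exp_lt_exp.mpr hlt)
  -- Stone-Weierstrass
  obtain ⟨p, hp⟩ := ContinuousMap.exists_mem_subalgebra_near_continuousMap_of_separatesPoints
    A sep ⟨K.restrict g, hg.restrict⟩ (ε / 2) (by positivity)
  -- a finite representation of p as a combination of exponentials
  obtain ⟨n, co, v, hv⟩ := Submodule.mem_span_set'.mp p.2
  choose h hrep using fun j => (v j).2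
  -- bounds on the functionals over K
  have hb : ∀ j : Fin n, ∃ C : ℝ, ∀ x ∈ K, |h j x| ≤ C := fun j =>
    hK.exists_bound_of_continuousOn (h j).continuous.continuousOn
  choose C hC using hb
  set B : ℝ := ∑ j, |co j| with hB
  have hBpos : (0:ℝ) < B + 1 := by positivity
  set ε' : ℝ := ε / (2 * (B + 1)) with hε'
  have hε'pos : 0 < ε' := by positivity
  -- Tauber-Wiener approximation of exp on each interval
  have htw : ∀ j : Fin n, ∃ (M : ℕ) (c w θ : Fin M → ℝ),
      ∀ t ∈ Set.Icc (-(C j)) (C j), |Real.exp t - ∑ i, c i * σ (w i * t - θ i)| < ε' :=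
    fun j => hσ (-(C j)) (C j) Real.exp Real.continuous_exp.continuousOn ε' hε'pos
  choose M cc ww θθ htw using htw
  -- assemble the network
  let e := Fintype.equivFin (Σ j : Fin n, Fin (M j))
  refine ⟨Fintype.card (Σ j : Fin n, Fin (M j)),
    fun i => (ww (e.symm i).1 (e.symm i).2) • h (e.symm i).1,
    fun i => co (e.symm i).1 * cc (e.symm i).1 (e.symm i).2,
    fun i => θθ (e.symm i).1 (e.symm i).2, ?_⟩
  intro x hx
  set x' : K := ⟨x, hx⟩
  -- rewrite the network sum as a double sum
  have hsum : ∑ i, (co (e.symm i).1 * cc (e.symm i).1 (e.symm i).2) *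
      σ (((ww (e.symm i).1 (e.symm i).2) • h (e.symm i).1) x - θθ (e.symm i).1 (e.symm i).2)
      = ∑ j : Fin n, co j * ∑ k : Fin (M j), cc j k * σ (ww j k * h j x - θθ j k) := by
    rw [Equiv.sum_comp e.symm (fun s : Σ j : Fin n, Fin (M j) =>
      (co s.1 * cc s.1 s.2) * σ (((ww s.1 s.2) • h s.1) x - θθ s.1 s.2))]
    rw [← Finset.univ_sigma_univ, Finset.sum_sigma]
    congr 1; ext j
    rw [Finset.mul_sum]
    congr 1; ext k
    simp [mul_assoc]
  rw [hsum]
  -- value of p at x'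
  have hpx : (p : C(K, ℝ)) x' = ∑ j, co j * Real.exp (h j x) := by
    rw [← hv]
    rw [ContinuousMap.coe_sum, Finset.sum_apply]
    congr 1; ext j
    have := hrep j
    rw [ContinuousMap.coe_smul, Pi.smul_apply, this]
    simp [x']
  -- first error: |g x - p x'| < ε/2
  have herr1 : |g x - (p : C(K, ℝ)) x'| < ε / 2 := by
    have := ContinuousMap.norm_coe_le_norm ((p : C(K, ℝ)) - ⟨K.restrict g, hg.restrict⟩) x'
    have h2 : |(p : C(K, ℝ)) x' - g x| < ε / 2 := by
      exact this.trans_lt hp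
    rwa [abs_sub_comm]
  -- second error
  have herr2 : |(p : C(K, ℝ)) x' -
      ∑ j : Fin n, co j * ∑ k : Fin (M j), cc j k * σ (ww j k * h j x - θθ j k)| ≤ B * ε' := by
    rw [hpx, ← Finset.sum_sub_distrib]
    refine (Finset.abs_sum_le_sum_abs _ _).trans ?_
    rw [hB, Finset.sum_mul]
    refine Finset.sum_le_sum fun j _ => ?_
    rw [← mul_sub, abs_mul]
    refine mul_le_mul_of_nonneg_left ?_ (abs_nonneg _)
    exact le_of_lt (htw j (h j x) (abs_le.mp (hC j x hx)))
  have hBe : B * ε' ≤ ε / 2 := by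
    rw [hε']
    rw [div_eq_iff (by positivity : (2:ℝ) * (B + 1) ≠ 0)] at *
    have : B ≤ B + 1 := by linarith
    calc B * (ε / (2 * (B + 1))) ≤ (B + 1) * (ε / (2 * (B + 1))) := by
          apply mul_le_mul_of_nonneg_right this (by positivity)
      _ = ε / 2 := by field_simp
  calc |g x - ∑ j : Fin n, co j * ∑ k : Fin (M j), cc j k * σ (ww j k * h j x - θθ j k)|
      ≤ |g x - (p : C(K, ℝ)) x'| + |(p : C(K, ℝ)) x' -
        ∑ j : Fin n, co j * ∑ k : Fin (M j), cc j k * σ (ww j k * h j x - θθ j k)| :=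
        abs_sub_le _ _ _
    _ < ε / 2 + ε / 2 := by
        apply add_lt_add_of_lt_of_le herr1 (herr2.trans hBe)
    _ = ε := by ring
end

section
/- Let X be a Hausdorff locally convex space, σ a continuous Tauber–Wiener function, K ⊆ X compact, m ≥ 1, g ∈ C(K, ℝ^m), and ε > 0. Then there exists a map H : X → ℝ^m, each of whose m components is a finite sum of terms c·σ(f(x) − θ) with f ∈ X*, c, θ ∈ ℝ, such that sup_{x∈K} ‖g(x) − H(x)‖_∞ < ε, where ‖·‖_∞ is the max norm on ℝ^m. -/
lemma scalar_approx
    {X : Type*} [AddCommGroup X] [Module ℝ X] [TopologicalSpace X]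
    [IsTopologicalAddGroup X] [ContinuousSMul ℝ X] [LocallyConvexSpace ℝ X] [T2Space X]
    (σ : ℝ → ℝ) (hσ : TauberWiener σ)
    (K : Set X) (hK : IsCompact K)
    (h : X → ℝ) (hh : ContinuousOn h K) (ε : ℝ) (hε : 0 < ε) :
    ∃ (N : ℕ) (f : Fin N → X →L[ℝ] ℝ) (c θ : Fin N → ℝ),
      ∀ x ∈ K, |h x - ∑ i, c i * σ (f i x - θ i)| < ε := by
  haveI : CompactSpace K := isCompact_iff_compactSpace.mp hK
  -- the set of exponentials of continuous linear functionals
  set S : Set C(K, ℝ) :=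
    Set.range (fun f : X →L[ℝ] ℝ =>
      ContinuousMap.mk (fun x : K => Real.exp (f x))
        (Real.continuous_exp.comp (f.continuous.comp continuous_subtype_val))) with hS
  -- S is a submonoid
  have one_mem : (1 : C(K, ℝ)) ∈ S := by
    refine ⟨0, ?_⟩
    ext x; simp
  have mul_mem : ∀ a ∈ S, ∀ b ∈ S, a * b ∈ S := by
    rintro a ⟨f, rfl⟩ b ⟨f', rfl⟩
    refine ⟨f + f', ?_⟩
    ext x
    simp [Real.exp_add]
  set M : Submonoid C(K, ℝ) := ⟨⟨S, fun {a b} ha hb => mul_mem a ha b hb⟩, one_mem⟩ with hM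
  set A : Subalgebra ℝ C(K, ℝ) := Algebra.adjoin ℝ S with hA
  have hsep : A.SeparatesPoints := by
    intro x y hxy
    have hxy' : (x : X) ≠ (y : X) := fun hc => hxy (Subtype.ext hc)
    obtain ⟨f, hf⟩ := SeparatingDual.exists_separating_of_ne (R := ℝ) hxy'
    refine ⟨_, ⟨ContinuousMap.mk (fun x : K => Real.exp (f x))
      (Real.continuous_exp.comp (f.continuous.comp continuous_subtype_val)),
      Algebra.subset_adjoin ⟨f, rfl⟩, rfl⟩, ?_⟩
    simpa using fun hc => hf (Real.exp_injective hc)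
  obtain ⟨⟨p, hpA⟩, hp⟩ := ContinuousMap.exists_mem_subalgebra_near_continuous_of_separatesPoints
    A hsep (fun x : K => h x) (hh.restrict) (ε/2) (by positivity)
  -- p is in the span of S
  have hspan : p ∈ Submodule.span ℝ S := by
    have : p ∈ Subalgebra.toSubmodule A := hpA
    rw [hA, Algebra.adjoin_eq_span] at this
    rwa [show Submonoid.closure S = M from Submonoid.closure_eq M] at this
  obtain ⟨n, b, u, hu⟩ := Submodule.mem_span_set'.mp hspan
  choose F hF using fun i => (u i).2
  -- for each i, bound f_i on K and approximate b i * exp by a network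
  have hbd : ∀ i : Fin n, ∃ R : ℝ, ∀ x ∈ K, F i x ∈ Set.Icc (-R) R := by
    intro i
    obtain ⟨R, hR⟩ := (hK.image (F i).continuous).isBounded.subset_closedBall 0
    exact ⟨R, fun x hx => by
      have := hR (Set.mem_image_of_mem _ hx)
      rwa [Real.closedBall_eq_Icc, zero_sub, zero_add] at this⟩
  choose R hR using hbd
  have hε' : 0 < ε / (2 * (n + 1)) := by positivity
  have hnet := fun i : Fin n => hσ (-(R i)) (R i) (fun t => b i * Real.exp t)
    (Continuous.continuousOn (by continuity)) _ hε'
  choose N c w θ hnet using hnet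
  -- assemble
  refine ⟨Fintype.card ((i : Fin n) × Fin (N i)),
    (fun q : (i : Fin n) × Fin (N i) => w q.1 q.2 • F q.1) ∘ (Fintype.equivFin _).symm,
    (fun q : (i : Fin n) × Fin (N i) => c q.1 q.2) ∘ (Fintype.equivFin _).symm,
    (fun q : (i : Fin n) × Fin (N i) => θ q.1 q.2) ∘ (Fintype.equivFin _).symm,
    fun x hx => ?_⟩
  have hsum : ∑ k, ((fun q : (i : Fin n) × Fin (N i) => c q.1 q.2) ∘ (Fintype.equivFin _).symm) k
        * σ ((((fun q : (i : Fin n) × Fin (N i) => w q.1 q.2 • F q.1) ∘ (Fintype.equivFin _).symm) k) x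
          - ((fun q : (i : Fin n) × Fin (N i) => θ q.1 q.2) ∘ (Fintype.equivFin _).symm) k)
      = ∑ i : Fin n, ∑ j : Fin (N i), c i j * σ (w i j * F i x - θ i j) := by
    refine Eq.trans (Fintype.sum_equiv (Fintype.equivFin ((i : Fin n) × Fin (N i))).symm _
      (fun q : (i : Fin n) × Fin (N i) => c q.1 q.2 * σ (w q.1 q.2 * F q.1 x - θ q.1 q.2))
      fun k => ?_) ?_
    · simp [ContinuousLinearMap.smul_apply, smul_eq_mul]
    · rw [← Finset.univ_sigma_univ, Finset.sum_sigma]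
  rw [hsum]
  have hpx : p ⟨x, hx⟩ = ∑ i : Fin n, b i * Real.exp (F i x) := by
    rw [← hu]
    simp only [ContinuousMap.coe_sum, Finset.sum_apply, ContinuousMap.coe_smul, Pi.smul_apply]
    refine Finset.sum_congr rfl fun i _ => ?_
    rw [← hF i]
    simp [smul_eq_mul]
  have h1 : |h x - p ⟨x, hx⟩| < ε / 2 := by
    have := hp ⟨x, hx⟩
    rw [Real.norm_eq_abs, abs_sub_comm] at this
    exact this
  have h2 : |p ⟨x, hx⟩ - ∑ i : Fin n, ∑ j : Fin (N i), c i j * σ (w i j * F i x - θ i j)|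
      < ε / 2 := by
    rw [hpx, ← Finset.sum_sub_distrib]
    calc |∑ i : Fin n, (b i * Real.exp (F i x) - ∑ j : Fin (N i), c i j * σ (w i j * F i x - θ i j))|
        ≤ ∑ i : Fin n, |b i * Real.exp (F i x) - ∑ j : Fin (N i), c i j * σ (w i j * F i x - θ i j)| :=
          Finset.abs_sum_le_sum_abs _ _
      _ ≤ ∑ _i : Fin n, ε / (2 * (n + 1)) := Finset.sum_le_sum fun i _ =>
          le_of_lt (hnet i (F i x) (hR i x hx))
      _ = n * (ε / (2 * (n + 1))) := by rw [Finset.sum_const]; simp [mul_comm]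
      _ < ε / 2 := by
          calc (n : ℝ) * (ε / (2 * (n + 1)))
              < ((n : ℝ) + 1) * (ε / (2 * (n + 1))) :=
                mul_lt_mul_of_pos_right (by linarith) hε'
            _ = ε / 2 := by field_simp
  calc |h x - ∑ i : Fin n, ∑ j : Fin (N i), c i j * σ (w i j * F i x - θ i j)|
      ≤ |h x - p ⟨x, hx⟩| + |p ⟨x, hx⟩ - _| := abs_sub_le _ _ _
    _ < ε / 2 + ε / 2 := add_lt_add h1 h2
    _ = ε := by ring

/-- Vector-valued universal approximation: each component of `H` is a single-hidden-layer
topological neural network, and `H` approximates `g` uniformly on `K` in the max norm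
on `ℝ^m` (the sup norm on `Fin m → ℝ`). -/
theorem topological_network_dense_vector
    {X : Type*} [AddCommGroup X] [Module ℝ X] [TopologicalSpace X]
    [IsTopologicalAddGroup X] [ContinuousSMul ℝ X] [LocallyConvexSpace ℝ X] [T2Space X]
    (σ : ℝ → ℝ) (hσcont : Continuous σ) (hσ : TauberWiener σ)
    (K : Set X) (hK : IsCompact K) (m : ℕ) (hm : 1 ≤ m)
    (g : X → Fin m → ℝ) (hg : ContinuousOn g K) (ε : ℝ) (hε : 0 < ε) :
    ∃ H : X → Fin m → ℝ,
      (∀ r : Fin m, ∃ (N : ℕ) (f : Fin N → X →L[ℝ] ℝ) (c θ : Fin N → ℝ),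
        ∀ x : X, H x r = ∑ i, c i * σ (f i x - θ i)) ∧
      ∀ x ∈ K, ‖g x - H x‖ < ε := by
  have key := fun r : Fin m => scalar_approx σ hσ K hK (fun x => g x r)
    ((continuous_apply r).comp_continuousOn hg) ε hε
  choose N f c θ hnet using key
  refine ⟨fun x r => ∑ i, c r i * σ (f r i x - θ r i),
    fun r => ⟨N r, f r, c r, θ r, fun x => rfl⟩, fun x hx => ?_⟩
  rw [pi_norm_lt_iff hε]
  intro r
  simpa [Real.norm_eq_abs] using hnet r x hx
end

section
/- Let K be a compact metric space, μ a finite signed Borel measure on K, and V ⊆ C(K, ℝ) a compact subset. Then for every δ > 0 there exist finitely many points x₁, …, x_k ∈ K and real coefficients ξ₁, …, ξ_k such that for all u ∈ V, |∫_K u dμ − Σ_j ξ_j u(x_j)| < δ. -/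
open MeasureTheory Set

section Helpers
variable {K : Type*} [MetricSpace K] [CompactSpace K] [MeasurableSpace K] [BorelSpace K]

lemma exists_partition' [Nonempty K] {r : ℝ} (hr : 0 < r) :
    ∃ (k : ℕ) (x : Fin k → K) (A : Fin k → Set K),
      (∀ j, MeasurableSet (A j)) ∧ Pairwise (Function.onFun Disjoint A) ∧
      (⋃ j, A j) = Set.univ ∧ ∀ j, A j ⊆ Metric.ball (x j) r := by
  obtain ⟨t, ht⟩ := IsCompact.elim_finite_subcover isCompact_univ
    (fun x : K => Metric.ball x r) (fun x => Metric.isOpen_ball)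
    (fun y _ => mem_iUnion.2 ⟨y, Metric.mem_ball_self hr⟩)
  set k := t.card with hk
  set e := t.equivFin with he
  set x : Fin k → K := fun j => (e.symm j : K) with hx
  set f : ℕ → Set K := fun n => if h : n < k then Metric.ball (x ⟨n, h⟩) r else ∅ with hf
  have hfm : ∀ n, MeasurableSet (f n) := by
    intro n
    simp only [hf]
    by_cases h : n < k <;> simp [h, Metric.isOpen_ball.measurableSet]
  refine ⟨k, x, fun j => disjointed f j, fun j => MeasurableSet.disjointed hfm j, ?_, ?_, ?_⟩
  · intro i j hij
    exact disjoint_disjointed f (by simpa using Fin.val_ne_of_ne hij)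
  · apply Set.eq_univ_of_univ_subset
    intro y _
    have : y ∈ ⋃ n, f n := by
      obtain ⟨z, hz, hyz⟩ := Set.mem_iUnion₂.1 (ht (Set.mem_univ y))
      refine Set.mem_iUnion.2 ⟨(e ⟨z, hz⟩ : ℕ), ?_⟩
      have h1 : ((e ⟨z, hz⟩ : Fin k) : ℕ) < k := (e ⟨z, hz⟩).isLt
      rw [hf]
      simp only [h1, dif_pos]
      have : x ⟨(e ⟨z, hz⟩ : ℕ), h1⟩ = z := by simp [hx, Fin.eta]
      rwa [this]
    rw [← iUnion_disjointed] at this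
    obtain ⟨n, hn⟩ := Set.mem_iUnion.1 this
    have hnk : n < k := by
      by_contra h
      have : f n = ∅ := by rw [hf]; simp [h]
      exact absurd (disjointed_subset f n hn) (by simp [this])
    exact Set.mem_iUnion.2 ⟨⟨n, hnk⟩, hn⟩
  · intro j
    refine (disjointed_subset f j).trans ?_
    rw [hf]
    simp [j.isLt]

omit [MetricSpace K] [CompactSpace K] [BorelSpace K] in
lemma sum_meas_toReal (ν : Measure K) [IsFiniteMeasure ν]
    {k : ℕ} {A : Fin k → Set K} (hmeas : ∀ j, MeasurableSet (A j))
    (hdisj : Pairwise (Function.onFun Disjoint A)) (hcover : (⋃ j, A j) = Set.univ) :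
    ∑ j, (ν (A j)).toReal = (ν Set.univ).toReal := by
  rw [← ENNReal.toReal_sum (fun j _ => (measure_lt_top ν _).ne), ← tsum_fintype (L := .unconditional _),
    ← measure_iUnion hdisj hmeas, hcover]

lemma cm_integrable (ν : Measure K) [IsFiniteMeasure ν] (u : C(K, ℝ)) :
    Integrable (fun t => u t) ν :=
  u.continuous.integrable_of_hasCompactSupport (HasCompactSupport.of_compactSpace _)

lemma integral_approx_partition (ν : Measure K) [IsFiniteMeasure ν]
    {k : ℕ} (x : Fin k → K) (A : Fin k → Set K)
    (hmeas : ∀ j, MeasurableSet (A j)) (hdisj : Pairwise (Function.onFun Disjoint A))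
    (hcover : (⋃ j, A j) = Set.univ)
    (u : C(K, ℝ)) {ε : ℝ}
    (hclose : ∀ j, ∀ t ∈ A j, |u t - u (x j)| ≤ ε) :
    |(∫ t, u t ∂ν) - ∑ j, (ν (A j)).toReal * u (x j)| ≤ ε * (ν Set.univ).toReal := by
  have hint := cm_integrable ν u
  have hsplit : (∫ t, u t ∂ν) = ∑ j, ∫ t in A j, u t ∂ν := by
    rw [← setIntegral_univ (μ := ν) (f := fun t => u t), ← hcover]
    exact integral_iUnion_fintype hmeas hdisj fun j => hint.integrableOn
  rw [hsplit, ← Finset.sum_sub_distrib]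
  refine (Finset.abs_sum_le_sum_abs _ _).trans ?_
  have key : ∀ j, |(∫ t in A j, u t ∂ν) - (ν (A j)).toReal * u (x j)| ≤ ε * (ν (A j)).toReal := by
    intro j
    have hc : (∫ t in A j, (u (x j) : ℝ) ∂ν) = (ν (A j)).toReal * u (x j) := by
      rw [setIntegral_const, smul_eq_mul]
      rfl
    rw [← hc, ← integral_sub hint.integrableOn (integrableOn_const (measure_lt_top _ _).ne)]
    calc |∫ t in A j, (u t - u (x j)) ∂ν| = ‖∫ t in A j, (u t - u (x j)) ∂ν‖ :=
          (Real.norm_eq_abs _).symm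
      _ ≤ ε * (ν (A j)).toReal := by
          apply norm_setIntegral_le_of_norm_le_const_ae' (measure_lt_top _ _)
          · exact Filter.Eventually.of_forall fun t ht => by
              simpa [Real.norm_eq_abs] using hclose j t ht
  refine (Finset.sum_le_sum fun j _ => key j).trans ?_
  rw [← Finset.mul_sum, sum_meas_toReal ν hmeas hdisj hcover]

lemma integral_dist_le (ν : Measure K) [IsFiniteMeasure ν]
    (u v : C(K, ℝ)) {ε : ℝ} (huv : dist u v ≤ ε) :
    |(∫ t, u t ∂ν) - (∫ t, v t ∂ν)| ≤ ε * (ν Set.univ).toReal := by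
  rw [← integral_sub (cm_integrable ν u) (cm_integrable ν v)]
  rw [← Real.norm_eq_abs]
  apply norm_integral_le_of_norm_le_const
  refine Filter.Eventually.of_forall fun t => ?_
  calc ‖u t - v t‖ = dist (u t) (v t) := by rw [Real.dist_eq, Real.norm_eq_abs]
    _ ≤ dist u v := ContinuousMap.dist_apply_le_dist t
    _ ≤ ε := huv

end Helpers

/-- Integration against a finite signed Borel measure is uniformly approximated, on a
compact subset `V` of `C(K, ℝ)`, by finite linear combinations of point evaluations. -/
theorem signed_integral_approx_by_point_evaluations
    {K : Type*} [MetricSpace K] [CompactSpace K]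
    [MeasurableSpace K] [BorelSpace K]
    (μ : SignedMeasure K)
    (V : Set C(K, ℝ)) (hV : IsCompact V)
    (δ : ℝ) (hδ : 0 < δ) :
    ∃ (k : ℕ) (x : Fin k → K) (ξ : Fin k → ℝ),
      ∀ u ∈ V,
        |((∫ t, u t ∂μ.toJordanDecomposition.posPart) -
            (∫ t, u t ∂μ.toJordanDecomposition.negPart)) -
          ∑ j, ξ j * u (x j)| < δ := by
  set pos := μ.toJordanDecomposition.posPart with hpos
  set neg := μ.toJordanDecomposition.negPart with hneg
  rcases V.eq_empty_or_nonempty with hVe | ⟨u₀, hu₀⟩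
  · exact ⟨0, Fin.elim0, Fin.elim0, by simp [hVe]⟩
  cases isEmpty_or_nonempty K with
  | inl h =>
    refine ⟨0, Fin.elim0, Fin.elim0, fun u hu => ?_⟩
    have h1 : (∫ t, u t ∂pos) = 0 := by simp [integral_of_isEmpty]
    have h2 : (∫ t, u t ∂neg) = 0 := by simp [integral_of_isEmpty]
    simpa [h1, h2] using hδ
  | inr h =>
    set M := (pos Set.univ).toReal + (neg Set.univ).toReal with hM
    have hM0 : 0 ≤ M := add_nonneg ENNReal.toReal_nonneg ENNReal.toReal_nonneg
    set ε := δ / (3 * (M + 1)) with hε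
    have hεpos : 0 < ε := by positivity
    -- finite ε-net of V
    obtain ⟨w, hwfin, hwV⟩ := (Metric.totallyBounded_iff.mp hV.totallyBounded) ε hεpos
    -- common modulus of uniform continuity for the net
    have huc : ∀ v : C(K, ℝ), ∃ r > 0, ∀ a b : K, dist a b < r → |v a - v b| ≤ ε := by
      intro v
      have hvc := CompactSpace.uniformContinuous_of_continuous v.continuous
      rw [Metric.uniformContinuous_iff] at hvc
      obtain ⟨r, hr, hrc⟩ := hvc ε hεpos
      exact ⟨r, hr, fun a b hab => le_of_lt (by simpa [Real.dist_eq] using hrc hab)⟩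
    choose rv hrv hrvc using huc
    set T := hwfin.toFinset with hT
    have hTne : T.Nonempty := by
      obtain ⟨v, hv, _⟩ := Set.mem_iUnion₂.1 (hwV hu₀)
      exact ⟨v, hwfin.mem_toFinset.2 hv⟩
    set r := T.inf' hTne rv with hr
    have hr0 : 0 < r := by
      rw [hr, Finset.lt_inf'_iff]
      exact fun v _ => hrv v
    -- partition of K
    obtain ⟨k, x, A, hmeas, hdisj, hcover, hsub⟩ := exists_partition' (K := K) hr0
    refine ⟨k, x, fun j => (pos (A j)).toReal - (neg (A j)).toReal, fun u hu => ?_⟩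
    obtain ⟨v, hv, huv⟩ := Set.mem_iUnion₂.1 (hwV hu)
    have hvT : v ∈ T := hwfin.mem_toFinset.2 hv
    have hduv : dist u v ≤ ε := le_of_lt huv
    -- the three error terms
    set Su := ∑ j, ((pos (A j)).toReal - (neg (A j)).toReal) * u (x j) with hSu
    set Sv := ∑ j, ((pos (A j)).toReal - (neg (A j)).toReal) * v (x j) with hSv
    have hclose : ∀ j, ∀ t ∈ A j, |v t - v (x j)| ≤ ε := by
      intro j t ht
      apply hrvc v t (x j)
      have := hsub j ht
      rw [Metric.mem_ball] at this
      exact lt_of_lt_of_le this (Finset.inf'_le rv hvT)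
    have e1 : |((∫ t, u t ∂pos) - (∫ t, u t ∂neg)) - ((∫ t, v t ∂pos) - (∫ t, v t ∂neg))| ≤
        ε * M := by
      have p1 := integral_dist_le pos u v hduv
      have p2 := integral_dist_le neg u v hduv
      calc |((∫ t, u t ∂pos) - (∫ t, u t ∂neg)) - ((∫ t, v t ∂pos) - (∫ t, v t ∂neg))|
          = |((∫ t, u t ∂pos) - (∫ t, v t ∂pos)) - ((∫ t, u t ∂neg) - (∫ t, v t ∂neg))| := by
            ring_nf
        _ ≤ |(∫ t, u t ∂pos) - (∫ t, v t ∂pos)| + |(∫ t, u t ∂neg) - (∫ t, v t ∂neg)| :=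
            abs_sub _ _
        _ ≤ ε * (pos Set.univ).toReal + ε * (neg Set.univ).toReal := add_le_add p1 p2
        _ = ε * M := by rw [hM]; ring
    have e2 : |((∫ t, v t ∂pos) - (∫ t, v t ∂neg)) - Sv| ≤ ε * M := by
      have p1 := integral_approx_partition pos x A hmeas hdisj hcover v hclose
      have p2 := integral_approx_partition neg x A hmeas hdisj hcover v hclose
      have hSv' : Sv = (∑ j, (pos (A j)).toReal * v (x j)) -
          ∑ j, (neg (A j)).toReal * v (x j) := by
        rw [hSv, ← Finset.sum_sub_distrib]
        exact Finset.sum_congr rfl fun j _ => by ring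
      calc |((∫ t, v t ∂pos) - (∫ t, v t ∂neg)) - Sv|
          = |((∫ t, v t ∂pos) - ∑ j, (pos (A j)).toReal * v (x j)) -
              ((∫ t, v t ∂neg) - ∑ j, (neg (A j)).toReal * v (x j))| := by
            rw [hSv']; ring_nf
        _ ≤ _ + _ := abs_sub _ _
        _ ≤ ε * (pos Set.univ).toReal + ε * (neg Set.univ).toReal := add_le_add p1 p2
        _ = ε * M := by rw [hM]; ring
    have e3 : |Sv - Su| ≤ ε * M := by
      rw [hSv, hSu, ← Finset.sum_sub_distrib]
      refine (Finset.abs_sum_le_sum_abs _ _).trans ?_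
      have : ∀ j : Fin k, |((pos (A j)).toReal - (neg (A j)).toReal) * v (x j) -
          ((pos (A j)).toReal - (neg (A j)).toReal) * u (x j)| ≤
          ((pos (A j)).toReal + (neg (A j)).toReal) * ε := by
        intro j
        rw [← mul_sub, abs_mul]
        refine mul_le_mul (le_trans (abs_sub _ _) (by
          rw [abs_of_nonneg ENNReal.toReal_nonneg, abs_of_nonneg ENNReal.toReal_nonneg]))
          ?_ (abs_nonneg _) (by positivity)
        calc |v (x j) - u (x j)| = dist (v (x j)) (u (x j)) := (Real.dist_eq _ _).symm
          _ ≤ dist v u := ContinuousMap.dist_apply_le_dist _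
          _ ≤ ε := by rwa [dist_comm]
      refine (Finset.sum_le_sum fun j _ => this j).trans ?_
      rw [← Finset.sum_mul, Finset.sum_add_distrib,
        sum_meas_toReal pos hmeas hdisj hcover, sum_meas_toReal neg hmeas hdisj hcover,
        mul_comm]
    calc |((∫ t, u t ∂pos) - (∫ t, u t ∂neg)) - Su|
        ≤ |((∫ t, u t ∂pos) - (∫ t, u t ∂neg)) - ((∫ t, v t ∂pos) - (∫ t, v t ∂neg))| +
          |((∫ t, v t ∂pos) - (∫ t, v t ∂neg)) - Sv| + |Sv - Su| :=
          le_trans (abs_sub_le _ _ _) (by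
            have := abs_sub_le ((∫ t, v t ∂pos) - (∫ t, v t ∂neg)) Sv Su
            linarith [abs_sub_le ((∫ t, u t ∂pos) - (∫ t, u t ∂neg))
              ((∫ t, v t ∂pos) - (∫ t, v t ∂neg)) Su])
      _ ≤ ε * M + ε * M + ε * M := add_le_add (add_le_add e1 e2) e3
      _ = δ * M / (M + 1) := by
          rw [hε]
          have hM1 : (M + 1) ≠ 0 := by positivity
          field_simp
          ring
      _ < δ := by
          rw [div_lt_iff₀ (by positivity)]
          nlinarith [hM0, hδ]
end

section
/- (Chen–Chen operator approximation for functionals) Let K be a compact metric space, V ⊆ C(K, ℝ) compact, σ a continuous Tauber–Wiener function, f : V → ℝ continuous, and ε > 0. Then there exist integers N, k ≥ 1, points x₁, …, x_k ∈ K, and reals cᵢ, θᵢ, ξᵢⱼ (1 ≤ i ≤ N, 1 ≤ j ≤ k) such that for all u ∈ V, |f(u) − Σᵢ cᵢ σ(Σⱼ ξᵢⱼ u(xⱼ) − θᵢ)| < ε. -/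
open Real

lemma cos_prod (p q : ℝ) : Real.cos p * Real.cos q = (Real.cos (p+q) + Real.cos (p-q))/2 := by
  rw [Real.cos_add, Real.cos_sub]; ring

section trig
variable {k : ℕ} (lo hi : Fin k → ℝ)

noncomputable def mkCos (a : Fin k → ℝ) (b : ℝ) : C(↥(Set.Icc lo hi), ℝ) :=
  ⟨fun y => Real.cos (∑ j, a j * y.1 j + b),
    Real.continuous_cos.comp ((continuous_finset_sum _ fun j _ =>
      continuous_const.mul ((continuous_apply j).comp continuous_subtype_val)).add
      continuous_const)⟩

lemma trig_dense (G : (Fin k → ℝ) → ℝ) (hG : Continuous G) (ε : ℝ) (hε : 0 < ε) :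
    ∃ (n : ℕ) (d b : Fin n → ℝ) (a : Fin n → Fin k → ℝ),
      ∀ y ∈ Set.Icc lo hi, |G y - ∑ m, d m * Real.cos (∑ j, a m j * y j + b m)| < ε := by
  haveI : CompactSpace ↥(Set.Icc lo hi) := isCompact_iff_compactSpace.mp isCompact_Icc
  set S : Set C(↥(Set.Icc lo hi), ℝ) :=
    {g | ∃ a b, g = mkCos lo hi a b} with hS
  have hmul : ∀ x y : C(↥(Set.Icc lo hi), ℝ), x ∈ Submodule.span ℝ S →
      y ∈ Submodule.span ℝ S → x * y ∈ Submodule.span ℝ S := by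
    intro x y hx hy
    have key : Submodule.span ℝ S * Submodule.span ℝ S ≤ Submodule.span ℝ S := by
      rw [Submodule.span_mul_span]
      refine Submodule.span_le.2 ?_
      rintro g ⟨g1, hg1, g2, hg2, rfl⟩
      obtain ⟨a, b, rfl⟩ := hg1
      obtain ⟨a', b', rfl⟩ := hg2
      have : mkCos lo hi a b * mkCos lo hi a' b'
          = (1/2 : ℝ) • mkCos lo hi (a + a') (b + b')
            + (1/2 : ℝ) • mkCos lo hi (a - a') (b - b') := by
        ext z
        simp only [mkCos, ContinuousMap.mul_apply, ContinuousMap.coe_mk,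
          ContinuousMap.add_apply, ContinuousMap.smul_apply, smul_eq_mul,
          Pi.add_apply, Pi.sub_apply]
        rw [cos_prod]
        have h1 : ∑ j, (a j + a' j) * z.1 j = (∑ j, a j * z.1 j) + ∑ j, a' j * z.1 j := by
          rw [← Finset.sum_add_distrib]; exact Finset.sum_congr rfl fun j _ => by ring
        have h2 : ∑ j, (a j - a' j) * z.1 j = (∑ j, a j * z.1 j) - ∑ j, a' j * z.1 j := by
          rw [← Finset.sum_sub_distrib]; exact Finset.sum_congr rfl fun j _ => by ring
        rw [h1, h2]; ring_nf
      show mkCos lo hi a b * mkCos lo hi a' b' ∈ _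
      rw [this]
      exact Submodule.add_mem _
        (Submodule.smul_mem _ _ (Submodule.subset_span ⟨_, _, rfl⟩))
        (Submodule.smul_mem _ _ (Submodule.subset_span ⟨_, _, rfl⟩))
    exact key (Submodule.mul_mem_mul hx hy)
  have hone : (1 : C(↥(Set.Icc lo hi), ℝ)) ∈ Submodule.span ℝ S := by
    have : (1 : C(↥(Set.Icc lo hi), ℝ)) = mkCos lo hi 0 0 := by
      ext z; simp [mkCos]
    rw [this]; exact Submodule.subset_span ⟨_, _, rfl⟩
  set A : Subalgebra ℝ C(↥(Set.Icc lo hi), ℝ) := (Submodule.span ℝ S).toSubalgebra hone hmul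
  have hsep : A.SeparatesPoints := by
    rintro y z hyz
    have : ∃ j, y.1 j ≠ z.1 j := by
      by_contra h
      push_neg at h
      exact hyz (Subtype.ext (funext h))
    obtain ⟨j, hj⟩ := this
    set M : ℝ := max |y.1 j| |z.1 j| + 1 with hM
    have hM0 : 0 < M := by positivity
    refine ⟨_, ⟨mkCos lo hi (Pi.single j (1/M) : Fin k → ℝ) (π/2), Submodule.subset_span ⟨_, _, rfl⟩, rfl⟩, ?_⟩
    simp only [mkCos, ContinuousMap.coe_mk]
    have hsum : ∀ w : ↥(Set.Icc lo hi), ∑ j', (Pi.single j (1/M) : Fin k → ℝ) j' * w.1 j' = (1/M) * w.1 j := by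
      intro w
      rw [Finset.sum_eq_single j]
      · simp
      · intro j' _ hj'; simp [Pi.single_apply, hj']
      · simp
    rw [hsum, hsum]
    have hmem : ∀ v : ℝ, |v| ≤ max |y.1 j| |z.1 j| → (1/M) * v + π/2 ∈ Set.Icc 0 π := by
      intro v hv
      have h1 : |(1/M) * v| < π/2 := by
        have e : |(1/M) * v| = |v| / M := by
          rw [abs_mul, abs_of_pos (by positivity : (0:ℝ) < 1/M)]; ring
        have h2 : |v| / M < 1 := by
          rw [div_lt_one hM0]
          calc |v| ≤ max |y.1 j| |z.1 j| := hv
            _ < M := by rw [hM]; linarith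
        rw [e]
        linarith [Real.pi_gt_three]
      rw [abs_lt] at h1
      constructor <;> [linarith; linarith [Real.pi_gt_three]]
    intro hcos
    apply hj
    have := Real.injOn_cos (hmem _ (le_max_left _ _)) (hmem _ (le_max_right _ _)) hcos
    have h1M : (1/M) ≠ 0 := by positivity
    have h' : (1/M) * y.1 j = (1/M) * z.1 j := by linarith
    exact mul_left_cancel₀ h1M h'
  obtain ⟨g, hg⟩ := ContinuousMap.exists_mem_subalgebra_near_continuous_of_separatesPoints
    A hsep (fun y => G y.1) (hG.comp continuous_subtype_val) ε hε
  have hgmem : (g : C(↥(Set.Icc lo hi), ℝ)) ∈ Submodule.span ℝ S := g.2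
  rw [Submodule.mem_span_set'] at hgmem
  obtain ⟨n, d, v, hv⟩ := hgmem
  choose a b hab using fun i => (v i).2
  refine ⟨n, d, b, a, fun y hy => ?_⟩
  have := hg ⟨y, hy⟩
  rw [Real.norm_eq_abs] at this
  have heval : (g : C(↥(Set.Icc lo hi), ℝ)) ⟨y, hy⟩
      = ∑ m, d m * Real.cos (∑ j, a m j * y j + b m) := by
    rw [← hv]
    rw [ContinuousMap.coe_sum, Finset.sum_apply]
    refine Finset.sum_congr rfl fun m _ => ?_
    have : ((v m : C(↥(Set.Icc lo hi), ℝ))) = mkCos lo hi (a m) (b m) := hab m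
    simp [this, mkCos]
  rw [heval] at this
  rw [abs_sub_comm]
  exact this
end trig

lemma tw_ridge {σ : ℝ → ℝ} (hσ : TauberWiener σ) {k : ℕ} (lo hi : Fin k → ℝ)
    (a : Fin k → ℝ) (b : ℝ) (ε : ℝ) (hε : 0 < ε) :
    ∃ (N : ℕ) (c w θ : Fin N → ℝ), ∀ y ∈ Set.Icc lo hi,
      |Real.cos ((∑ j, a j * y j) + b)
        - ∑ i, c i * σ (w i * (∑ j, a j * y j) - θ i)| < ε := by
  set M : ℝ := (∑ j, |a j| * (max |lo j| |hi j|)) + 1 with hMdef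
  obtain ⟨N, c, w, θ, h⟩ := hσ (-M) M (fun t => Real.cos (t + b))
    (Continuous.continuousOn (by fun_prop)) ε hε
  refine ⟨N, c, w, θ, fun y hy => ?_⟩
  refine h _ ?_
  have hb : |∑ j, a j * y j| ≤ M - 1 := by
    calc |∑ j, a j * y j| ≤ ∑ j, |a j * y j| := Finset.abs_sum_le_sum_abs _ _
      _ ≤ ∑ j, |a j| * (max |lo j| |hi j|) := by
          refine Finset.sum_le_sum fun j _ => ?_
          rw [abs_mul]
          refine mul_le_mul_of_nonneg_left ?_ (abs_nonneg _)
          rw [abs_le]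
          constructor
          · have := neg_abs_le (lo j)
            have h2 := hy.1 j
            have h3 : |lo j| ≤ max |lo j| |hi j| := le_max_left _ _
            linarith
          · have := le_abs_self (hi j)
            have h2 := hy.2 j
            have h3 : |hi j| ≤ max |lo j| |hi j| := le_max_right _ _
            linarith
      _ = M - 1 := by rw [hMdef]; ring
  rw [Set.mem_Icc]
  rw [abs_le] at hb
  constructor <;> linarith

/-- Chen–Chen operator approximation theorem for continuous functionals on a compact
subset of `C(K, ℝ)`. -/
theorem chen_chen_functional_approximation
    {K : Type*} [MetricSpace K] [CompactSpace K] [Nonempty K]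
    (σ : ℝ → ℝ) (hσcont : Continuous σ) (hσ : TauberWiener σ)
    (V : Set C(K, ℝ)) (hV : IsCompact V)
    (f : C(K, ℝ) → ℝ) (hf : ContinuousOn f V)
    (ε : ℝ) (hε : 0 < ε) :
    ∃ (N k : ℕ), 1 ≤ N ∧ 1 ≤ k ∧
      ∃ (x : Fin k → K) (c θ : Fin N → ℝ) (ξ : Fin N → Fin k → ℝ),
        ∀ u ∈ V,
          |f u - ∑ i, c i * σ (∑ j, ξ i j * u (x j) - θ i)| < ε := by
  classical
  -- Reduce to a version without the `1 ≤` side conditions, by padding with zeros.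
  suffices h : ∃ (N k : ℕ), ∃ (x : Fin k → K) (c θ : Fin N → ℝ) (ξ : Fin N → Fin k → ℝ),
      ∀ u ∈ V, |f u - ∑ i, c i * σ (∑ j, ξ i j * u (x j) - θ i)| < ε by
    obtain ⟨N, k, x, c, θ, ξ, hx⟩ := h
    set x' : Fin (k+1) → K := Fin.cons (Classical.arbitrary K) x with hx'
    set c' : Fin (N+1) → ℝ := Fin.cons 0 c with hc'
    set θ' : Fin (N+1) → ℝ := Fin.cons 0 θ with hθ'
    set ξ' : Fin (N+1) → Fin (k+1) → ℝ :=
      Fin.cons (fun _ => 0) (fun i => Fin.cons (0:ℝ) (ξ i)) with hξ'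
    refine ⟨N + 1, k + 1, by omega, by omega, x', c', θ', ξ', fun u hu => ?_⟩
    have key : (∑ i, c' i * σ (∑ j, ξ' i j * u (x' j) - θ' i))
        = ∑ i : Fin N, c i * σ (∑ j, ξ i j * u (x j) - θ i) := by
      rw [Fin.sum_univ_succ]
      have h0 : c' 0 = 0 := rfl
      rw [h0, zero_mul, zero_add]
      refine Finset.sum_congr rfl fun i _ => ?_
      have h1 : c' i.succ = c i := rfl
      have h2 : θ' i.succ = θ i := rfl
      have h3 : (∑ j, ξ' i.succ j * u (x' j)) = ∑ j, ξ i j * u (x j) := by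
        rw [Fin.sum_univ_succ]
        have h4 : ξ' i.succ 0 = 0 := rfl
        rw [h4, zero_mul, zero_add]
        refine Finset.sum_congr rfl fun j _ => ?_
        have h5 : ξ' i.succ j.succ = ξ i j := rfl
        have h6 : x' j.succ = x j := rfl
        rw [h5, h6]
      rw [h1, h2, h3]
    rw [key]
    exact hx u hu
  rcases V.eq_empty_or_nonempty with hVe | hVne
  · exact ⟨0, 0, Fin.elim0, Fin.elim0, Fin.elim0, Fin.elim0,
      fun u hu => absurd hu (by simp [hVe])⟩
  obtain ⟨u₀, hu₀⟩ := hVne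
  -- a bound on sup norms over V
  obtain ⟨R, hR⟩ := (Metric.isBounded_iff_subset_closedBall 0).mp hV.isBounded
  have hRb : ∀ u ∈ V, ∀ p : K, |u p| ≤ R := by
    intro u hu p
    have h1 : ‖u‖ ≤ R := by
      have := hR hu
      rwa [Metric.mem_closedBall, dist_zero_right] at this
    calc |u p| = ‖u p‖ := rfl
      _ ≤ ‖u‖ := ContinuousMap.norm_coe_le_norm u p
      _ ≤ R := h1
  -- uniform continuity of f on V
  have hfu : UniformContinuousOn f V := hV.uniformContinuousOn_of_continuous hf
  rw [Metric.uniformContinuousOn_iff] at hfu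
  obtain ⟨δ₀, hδ₀, hfδ⟩ := hfu (ε/4) (by positivity)
  -- finite (δ₀/16)-net of V consisting of points of V
  obtain ⟨t0, ht0V, ht0fin, ht0cov⟩ := EMetric.totallyBounded_iff'.mp hV.totallyBounded
    (ENNReal.ofReal (δ₀/16)) (by simp; positivity)
  set t : Finset C(K, ℝ) := ht0fin.toFinset with ht
  have htV : ∀ m ∈ t, m ∈ V := fun m hm => ht0V (ht0fin.mem_toFinset.mp hm)
  have htcov : ∀ u ∈ V, ∃ m ∈ t, dist u m < δ₀/16 := by
    intro u hu
    obtain ⟨m, hm, hlt⟩ := Set.mem_iUnion₂.mp (ht0cov hu)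
    refine ⟨m, ht0fin.mem_toFinset.mpr hm, ?_⟩
    rw [EMetric.mem_ball, edist_dist] at hlt
    exact (ENNReal.ofReal_lt_ofReal_iff (by positivity)).mp hlt
  have htne : t.Nonempty := by
    obtain ⟨m, hm, _⟩ := htcov u₀ hu₀
    exact ⟨m, hm⟩
  -- a common modulus of continuity for the net functions
  have huc : ∀ m : C(K, ℝ), ∃ η, 0 < η ∧ ∀ p q : K, dist p q < η →
      dist (m p) (m q) < δ₀/16 := by
    intro m
    have := CompactSpace.uniformContinuous_of_continuous (map_continuous m)
    rw [Metric.uniformContinuous_iff] at this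
    obtain ⟨η, hη, hh⟩ := this (δ₀/16) (by positivity)
    exact ⟨η, hη, fun p q h => hh h⟩
  choose η hη1 hη2 using huc
  set η0 : ℝ := t.inf' htne η with hη0def
  have hη0pos : 0 < η0 := by
    rw [hη0def, Finset.lt_inf'_iff]
    exact fun m _ => hη1 m
  -- finite η0-net of K
  obtain ⟨s, hs⟩ := IsCompact.elim_finite_subcover isCompact_univ
    (fun q : K => Metric.ball q η0) (fun q => Metric.isOpen_ball)
    (by intro p _; exact Set.mem_iUnion.2 ⟨p, Metric.mem_ball_self hη0pos⟩)
  set k' : ℕ := s.card with hk'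
  set x : Fin k' → K := fun j => ((s.equivFin.symm j : s) : K) with hx
  have hscov : ∀ p : K, ∃ j : Fin k', dist p (x j) < η0 := by
    intro p
    have := hs (Set.mem_univ p)
    obtain ⟨q, hq, hlt⟩ := Set.mem_iUnion₂.mp this
    refine ⟨s.equivFin ⟨q, hq⟩, ?_⟩
    have : x (s.equivFin ⟨q, hq⟩) = q := by
      rw [hx]; simp
    rw [this]
    exact hlt
  -- oscillation bound for functions in V over distance η0
  have hosc : ∀ u ∈ V, ∀ p q : K, dist p q < η0 → |u p - u q| ≤ 3 * (δ₀/16) := by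
    intro u hu p q hpq
    obtain ⟨m, hm, hum⟩ := htcov u hu
    have h1 : |u p - m p| ≤ δ₀/16 := by
      have := ContinuousMap.dist_apply_le_dist (f := u) (g := m) p
      rw [Real.dist_eq] at this
      linarith
    have h2 : |u q - m q| ≤ δ₀/16 := by
      have := ContinuousMap.dist_apply_le_dist (f := u) (g := m) q
      rw [Real.dist_eq] at this
      linarith
    have h3 : |m p - m q| ≤ δ₀/16 := by
      have hle : η0 ≤ η m := Finset.inf'_le _ hm
      have := hη2 m p q (lt_of_lt_of_le hpq hle)
      rw [Real.dist_eq] at this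
      linarith
    calc |u p - u q| = |(u p - m p) + (m p - m q) + (m q - u q)| := by ring_nf
      _ ≤ |u p - m p| + |m p - m q| + |m q - u q| := by
          exact (abs_add_three _ _ _)
      _ ≤ δ₀/16 + δ₀/16 + δ₀/16 := by
          rw [abs_sub_comm (m q) (u q)]
          gcongr
      _ = 3 * (δ₀/16) := by ring
  -- closeness criterion through the sample points
  have hclose : ∀ u ∈ V, ∀ v ∈ V, (∀ j, |u (x j) - v (x j)| ≤ δ₀/8) →
      dist u v ≤ δ₀/8 + 6 * (δ₀/16) := by
    intro u hu v hv hj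
    rw [ContinuousMap.dist_le (by positivity)]
    intro p
    obtain ⟨j, hjp⟩ := hscov p
    have h1 := hosc u hu p (x j) hjp
    have h2 := hosc v hv p (x j) hjp
    have h3 := hj j
    rw [Real.dist_eq]
    have : u p - v p = (u p - u (x j)) + (u (x j) - v (x j)) + (v (x j) - v p) := by ring
    rw [this]
    calc |(u p - u (x j)) + (u (x j) - v (x j)) + (v (x j) - v p)|
        ≤ |u p - u (x j)| + |u (x j) - v (x j)| + |v (x j) - v p| := abs_add_three _ _ _
      _ ≤ 3 * (δ₀/16) + δ₀/8 + 3 * (δ₀/16) := by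
          rw [abs_sub_comm (v (x j)) (v p)]
          gcongr
      _ = δ₀/8 + 6 * (δ₀/16) := by ring
  -- the sampling map and partition functions
  set Φ : C(K, ℝ) → Fin k' → ℝ := fun u j => u (x j) with hΦ
  set δ₂ : ℝ := δ₀/8 with hδ₂
  set φ : C(K, ℝ) → (Fin k' → ℝ) → ℝ := fun m y => max (δ₂ - dist y (Φ m)) 0 with hφ
  have hφnn : ∀ m y, 0 ≤ φ m y := fun m y => le_max_right _ _
  have hφcont : ∀ m, Continuous (φ m) := by
    intro m
    exact ((continuous_const.sub (continuous_id.dist continuous_const)).max continuous_const)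
  set G : (Fin k' → ℝ) → ℝ :=
    fun y => (∑ m ∈ t, f m * φ m y) / max (∑ m ∈ t, φ m y) (δ₂/2) with hG
  have hGcont : Continuous G := by
    apply Continuous.div
    · exact continuous_finset_sum _ fun m _ => continuous_const.mul (hφcont m)
    · exact (continuous_finset_sum _ fun m _ => hφcont m).max continuous_const
    · intro y
      refine ne_of_gt (lt_of_lt_of_le (by positivity) (le_max_right _ _))
  -- the denominator is bounded below on Φ(V)
  have hden : ∀ u ∈ V, δ₂/2 ≤ ∑ m ∈ t, φ m (Φ u) := by
    intro u hu
    obtain ⟨m, hm, hum⟩ := htcov u hu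
    have hdistp : dist (Φ u) (Φ m) ≤ δ₀/16 := by
      rw [dist_pi_le_iff (by positivity)]
      intro j
      calc dist (Φ u j) (Φ m j) = dist (u (x j)) (m (x j)) := rfl
        _ ≤ dist u m := ContinuousMap.dist_apply_le_dist _
        _ ≤ δ₀/16 := le_of_lt hum
    have : δ₂/2 ≤ φ m (Φ u) := by
      have : δ₂/2 ≤ δ₂ - dist (Φ u) (Φ m) := by
        rw [hδ₂]; linarith
      exact le_trans this (le_max_left _ _)
    refine le_trans this (Finset.single_le_sum (fun m _ => hφnn m (Φ u)) hm)
  -- functions with non-vanishing weight are ε/4-close in f-value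
  have hnear : ∀ u ∈ V, ∀ m ∈ t, φ m (Φ u) ≠ 0 → |f u - f m| ≤ ε/4 := by
    intro u hu m hm hne
    have hpos : 0 < δ₂ - dist (Φ u) (Φ m) := by
      by_contra hc
      push_neg at hc
      exact hne (max_eq_right hc)
    have hcoord : ∀ j, |u (x j) - m (x j)| ≤ δ₀/8 := by
      intro j
      have h1 : dist (Φ u j) (Φ m j) ≤ dist (Φ u) (Φ m) := dist_le_pi_dist _ _ _
      have h2 : dist (Φ u) (Φ m) < δ₂ := by linarith
      have := h1.trans (le_of_lt h2)
      rw [hδ₂] at this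
      calc |u (x j) - m (x j)| = dist (Φ u j) (Φ m j) := (Real.dist_eq _ _).symm
        _ ≤ δ₀/8 := this
    have hd := hclose u hu m (htV m hm) hcoord
    have : dist u m < δ₀ := by
      calc dist u m ≤ δ₀/8 + 6 * (δ₀/16) := hd
        _ < δ₀ := by linarith
    exact le_of_lt (hfδ u hu m (htV m hm) this)
  -- the key approximation of f by G ∘ Φ
  have hmain1 : ∀ u ∈ V, |f u - G (Φ u)| ≤ ε/4 := by
    intro u hu
    set D : ℝ := ∑ m ∈ t, φ m (Φ u) with hD
    have hDpos : 0 < D := lt_of_lt_of_le (by positivity) (hden u hu)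
    have hmax : max D (δ₂/2) = D := max_eq_left (hden u hu)
    have hGval : G (Φ u) = (∑ m ∈ t, f m * φ m (Φ u)) / D := by
      rw [hG]
      simp only []
      rw [hmax]
    have hdiff : f u - G (Φ u) = (∑ m ∈ t, (f u - f m) * φ m (Φ u)) / D := by
      rw [hGval]
      rw [eq_div_iff hDpos.ne']
      have expand : ∑ m ∈ t, (f u - f m) * φ m (Φ u)
          = f u * D - ∑ m ∈ t, f m * φ m (Φ u) := by
        rw [hD, Finset.mul_sum, ← Finset.sum_sub_distrib]
        exact Finset.sum_congr rfl fun m _ => by ring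
      rw [expand]
      field_simp
    rw [hdiff, abs_div, abs_of_pos hDpos, div_le_iff₀ hDpos]
    calc |∑ m ∈ t, (f u - f m) * φ m (Φ u)|
        ≤ ∑ m ∈ t, |(f u - f m) * φ m (Φ u)| := Finset.abs_sum_le_sum_abs _ _
      _ ≤ ∑ m ∈ t, (ε/4) * φ m (Φ u) := by
          refine Finset.sum_le_sum fun m hm => ?_
          rw [abs_mul, abs_of_nonneg (hφnn m (Φ u))]
          rcases eq_or_ne (φ m (Φ u)) 0 with h0 | h0
          · rw [h0]; simp
          · exact mul_le_mul_of_nonneg_right (hnear u hu m hm h0) (hφnn m (Φ u))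
      _ = ε/4 * D := by rw [hD, Finset.mul_sum]
  -- V maps into the box [-R, R]^k'
  have hR0 : 0 ≤ R := le_trans (abs_nonneg _) (hRb u₀ hu₀ (Classical.arbitrary K))
  set lo : Fin k' → ℝ := fun _ => -R with hlo
  set hi : Fin k' → ℝ := fun _ => R with hhi
  have hbox : ∀ u ∈ V, Φ u ∈ Set.Icc lo hi := by
    intro u hu
    constructor <;> intro j
    · have := hRb u hu (x j)
      rw [abs_le] at this
      exact this.1
    · have := hRb u hu (x j)
      rw [abs_le] at this
      exact this.2
  -- trigonometric approximation of G on the box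
  obtain ⟨n, d, b, a, htrig⟩ := trig_dense lo hi G hGcont (ε/4) (by positivity)
  -- replace each cosine by a σ-network
  set Cd : ℝ := (∑ m, |d m|) + 1 with hCd
  have hCdpos : 0 < Cd := by positivity
  have hridge : ∀ m : Fin n, ∃ (N : ℕ) (c w θ : Fin N → ℝ), ∀ y ∈ Set.Icc lo hi,
      |Real.cos ((∑ j, a m j * y j) + b m)
        - ∑ i, c i * σ (w i * (∑ j, a m j * y j) - θ i)| < ε/(4*Cd) := by
    intro m
    exact tw_ridge hσ lo hi (a m) (b m) _ (by positivity)
  choose NN cc ww θθ hnet using hridge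
  -- build the combined network indexed by a sigma type
  set I := (m : Fin n) × Fin (NN m) with hI
  set F : I → (Fin k' → ℝ) → ℝ :=
    fun p y => (d p.1 * cc p.1 p.2) * σ (∑ j, (ww p.1 p.2 * a p.1 j) * y j - θθ p.1 p.2)
    with hF
  have hmain2 : ∀ y ∈ Set.Icc lo hi, |G y - ∑ p : I, F p y| < ε/4 + ε/4 := by
    intro y hy
    have hsplit : ∑ p : I, F p y
        = ∑ m : Fin n, d m * ∑ i, cc m i * σ (ww m i * (∑ j, a m j * y j) - θθ m i) := by
      rw [← Finset.univ_sigma_univ, Finset.sum_sigma]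
      refine Finset.sum_congr rfl fun m _ => ?_
      rw [Finset.mul_sum]
      refine Finset.sum_congr rfl fun i _ => ?_
      have hFval : F ⟨m, i⟩ y
          = d m * cc m i * σ (∑ j, (ww m i * a m j) * y j - θθ m i) := rfl
      have hlin : ∑ j, (ww m i * a m j) * y j = ww m i * ∑ j, a m j * y j := by
        rw [Finset.mul_sum]
        exact Finset.sum_congr rfl fun j _ => by ring
      rw [hFval, hlin]
      ring
    rw [hsplit]
    have h1 := htrig y hy
    have h2 : |∑ m : Fin n, d m * Real.cos ((∑ j, a m j * y j) + b m)
        - ∑ m : Fin n, d m * ∑ i, cc m i * σ (ww m i * (∑ j, a m j * y j) - θθ m i)|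
        ≤ ε/4 := by
      rw [← Finset.sum_sub_distrib]
      calc |∑ m : Fin n, (d m * Real.cos ((∑ j, a m j * y j) + b m)
              - d m * ∑ i, cc m i * σ (ww m i * (∑ j, a m j * y j) - θθ m i))|
          ≤ ∑ m : Fin n, |d m * Real.cos ((∑ j, a m j * y j) + b m)
              - d m * ∑ i, cc m i * σ (ww m i * (∑ j, a m j * y j) - θθ m i)| :=
            Finset.abs_sum_le_sum_abs _ _
        _ ≤ ∑ m : Fin n, |d m| * (ε/(4*Cd)) := by
            refine Finset.sum_le_sum fun m _ => ?_
            rw [← mul_sub, abs_mul]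
            exact mul_le_mul_of_nonneg_left (le_of_lt (hnet m y hy)) (abs_nonneg _)
        _ = (∑ m, |d m|) * (ε/(4*Cd)) := by rw [Finset.sum_mul]
        _ ≤ Cd * (ε/(4*Cd)) := by
            refine mul_le_mul_of_nonneg_right ?_ (by positivity)
            rw [hCd]; linarith
        _ = ε/4 := by field_simp
    calc |G y - ∑ m : Fin n, d m * ∑ i, cc m i * σ (ww m i * (∑ j, a m j * y j) - θθ m i)|
        ≤ |G y - ∑ m : Fin n, d m * Real.cos ((∑ j, a m j * y j) + b m)|
          + |∑ m : Fin n, d m * Real.cos ((∑ j, a m j * y j) + b m)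
            - ∑ m : Fin n, d m * ∑ i, cc m i * σ (ww m i * (∑ j, a m j * y j) - θθ m i)| :=
          abs_sub_le _ _ _
      _ < ε/4 + ε/4 := by linarith
  -- transport the sigma-indexed network to a `Fin`-indexed one
  set N₀ : ℕ := Fintype.card I with hN₀
  set e : I ≃ Fin N₀ := Fintype.equivFin I with he
  refine ⟨N₀, k', x, fun i => d (e.symm i).1 * cc (e.symm i).1 (e.symm i).2,
    fun i => θθ (e.symm i).1 (e.symm i).2,
    fun i j => ww (e.symm i).1 (e.symm i).2 * a (e.symm i).1 j, fun u hu => ?_⟩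
  have hsum : ∑ i : Fin N₀, (d (e.symm i).1 * cc (e.symm i).1 (e.symm i).2)
      * σ (∑ j, (ww (e.symm i).1 (e.symm i).2 * a (e.symm i).1 j) * u (x j)
        - θθ (e.symm i).1 (e.symm i).2)
      = ∑ p : I, F p (Φ u) := by
    rw [← Equiv.sum_comp e.symm (fun p => F p (Φ u))]
  rw [hsum]
  have h1 := hmain1 u hu
  have h2 := hmain2 (Φ u) (hbox u hu)
  calc |f u - ∑ p : I, F p (Φ u)|
      ≤ |f u - G (Φ u)| + |G (Φ u) - ∑ p : I, F p (Φ u)| := abs_sub_le _ _ _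
    _ < ε/4 + (ε/4 + ε/4) := by linarith
    _ < ε := by linarith
end

section
/- Let K ⊂ ℝ^d be compact and W ⊆ C(K, ℝ^m) compact in the sup norm, and assume σ is a continuous Tauber–Wiener function (so ridge networks y ↦ Σ α σ(ω·y + ζ) are dense in C(K', ℝ) for compact K' ⊂ ℝ^d). Then for every δ > 0 there exist N ≥ 1, ridge functions φ_k(y) = σ(ω_k·y + ζ_k) (k = 1,…,N), and continuous maps c_k : W → ℝ^m such that for all h ∈ W, sup_{y∈K} ‖h(y) − Σ_k c_k(h) φ_k(y)‖ ≤ 2δ. -/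
open Matrix

section aux

variable {d : ℕ} {K : Set (Fin d → ℝ)} [CompactSpace K]

lemma dot_cont (a : Fin d → ℝ) : Continuous fun y : K => a ⬝ᵥ (y : Fin d → ℝ) := by
  show Continuous fun y : K => ∑ i : Fin d, a i * (y : Fin d → ℝ) i
  exact continuous_finset_sum _ fun i _ =>
    continuous_const.mul ((continuous_apply i).comp continuous_subtype_val)

/-- Scalar ridge density: sums `∑ α k * σ(ω k ⬝ᵥ y + ζ k)` approximate any
continuous function on the compact set `K` uniformly. -/
lemma ridge_dense {σ : ℝ → ℝ} (hσ : TauberWiener σ)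
    (f : C(K, ℝ)) {ε : ℝ} (hε : 0 < ε) :
    ∃ (n : ℕ) (ω : Fin n → Fin d → ℝ) (ζ α : Fin n → ℝ),
      ∀ y : K, |f y - ∑ k, α k * σ (ω k ⬝ᵥ (y : Fin d → ℝ) + ζ k)| < ε := by
  classical
  -- the exponential ridge functions
  set expDot : (Fin d → ℝ) → C(K, ℝ) := fun a =>
    ⟨fun y => Real.exp (a ⬝ᵥ (y : Fin d → ℝ)), Real.continuous_exp.comp (dot_cont a)⟩ with hexp
  set E : Set C(K, ℝ) := Set.range expDot with hE
  -- E is a submonoid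
  have hone : (1 : C(K, ℝ)) ∈ E := ⟨0, by ext y; simp [expDot]⟩
  have hmul : ∀ x ∈ E, ∀ z ∈ E, x * z ∈ E := by
    rintro _ ⟨a, rfl⟩ _ ⟨b, rfl⟩
    exact ⟨a + b, by ext y; simp [expDot, add_dotProduct, Real.exp_add]⟩
  set M : Submonoid C(K, ℝ) :=
    { carrier := E, one_mem' := hone, mul_mem' := fun hx hy => hmul _ hx _ hy } with hM
  -- Stone-Weierstrass
  have hsep : (Algebra.adjoin ℝ E).SeparatesPoints := by
    intro x y hxy
    have : ∃ i, (x : Fin d → ℝ) i ≠ (y : Fin d → ℝ) i := by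
      by_contra hc
      push_neg at hc
      exact hxy (Subtype.ext (funext hc))
    obtain ⟨i, hi⟩ := this
    refine ⟨_, ⟨expDot (Pi.single i 1), Algebra.subset_adjoin ⟨Pi.single i 1, rfl⟩, rfl⟩, ?_⟩
    simp only [expDot, ContinuousMap.coe_mk, single_dotProduct, one_mul, ne_eq,
      Real.exp_eq_exp]
    exact hi
  obtain ⟨g, hg⟩ :=
    ContinuousMap.exists_mem_subalgebra_near_continuousMap_of_separatesPoints
      (Algebra.adjoin ℝ E) hsep f (ε / 2) (half_pos hε)
  -- g is a finite linear combination of exponentials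
  have hg2 : (g : C(K, ℝ)) ∈ Submodule.span ℝ E := by
    have h1 : (g : C(K, ℝ)) ∈ Subalgebra.toSubmodule (Algebra.adjoin ℝ E) := g.2
    rw [Algebra.adjoin_eq_span] at h1
    have h2 : Submonoid.closure E = M := Submonoid.closure_eq M
    rwa [show (↑(Submonoid.closure E) : Set C(K, ℝ)) = E from by rw [h2]; rfl] at h1
  obtain ⟨J, lam, gs, hsum⟩ := Submodule.mem_span_set'.1 hg2
  have hrep : ∀ j : Fin J, ∃ a : Fin d → ℝ, expDot a = (gs j : C(K, ℝ)) := fun j => (gs j).2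
  choose a ha using hrep
  -- pointwise: f is ε/2-close to ∑ lam j * exp (a j ⬝ᵥ y)
  have hclose : ∀ y : K, |f y - ∑ j, lam j * Real.exp (a j ⬝ᵥ (y : Fin d → ℝ))| < ε / 2 := by
    intro y
    have h1 : ‖((g : C(K, ℝ)) - f) y‖ < ε / 2 :=
      ((ContinuousMap.norm_lt_iff _ (half_pos hε)).1 hg) y
    have h2 : (g : C(K, ℝ)) y = ∑ j, lam j * Real.exp (a j ⬝ᵥ (y : Fin d → ℝ)) := by
      rw [← hsum]
      simp only [ContinuousMap.sum_apply, ContinuousMap.smul_apply, smul_eq_mul]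
      refine Finset.sum_congr rfl fun j _ => ?_
      rw [← ha j]
      rfl
    rw [ContinuousMap.sub_apply, h2] at h1
    rw [abs_sub_comm]
    exact h1
  -- bounds for the arguments a j ⬝ᵥ y
  have hAB : ∀ j : Fin J, ∃ A B : ℝ, ∀ y : K, a j ⬝ᵥ (y : Fin d → ℝ) ∈ Set.Icc A B := by
    intro j
    obtain ⟨Bu, hBu⟩ := (isCompact_range (dot_cont (K := K) (a j))).bddAbove
    obtain ⟨Bl, hBl⟩ := (isCompact_range (dot_cont (K := K) (a j))).bddBelow
    exact ⟨Bl, Bu, fun y => ⟨hBl ⟨y, rfl⟩, hBu ⟨y, rfl⟩⟩⟩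
  choose A B hAB using hAB
  -- Tauber-Wiener approximation of exp on each interval
  set S : ℝ := ∑ j, |lam j| with hS
  have hSnn : 0 ≤ S := Finset.sum_nonneg fun j _ => abs_nonneg _
  set ε' : ℝ := ε / (2 * (S + 1)) with hε'
  have hε'pos : 0 < ε' := div_pos hε (by linarith)
  have key : ∀ j : Fin J, ∃ (n : ℕ) (c w θ : Fin n → ℝ),
      ∀ t ∈ Set.Icc (A j) (B j), |Real.exp t - ∑ i, c i * σ (w i * t - θ i)| < ε' :=
    fun j => hσ (A j) (B j) Real.exp Real.continuous_exp.continuousOn ε' hε'pos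
  choose n c w θ hkey using key
  -- combine into a single family indexed by a sigma type
  set γ := (j : Fin J) × Fin (n j) with hγ
  set ωp : γ → Fin d → ℝ := fun p => w p.1 p.2 • a p.1 with hωp
  set ζp : γ → ℝ := fun p => -θ p.1 p.2 with hζp
  set αp : γ → ℝ := fun p => lam p.1 * c p.1 p.2 with hαp
  have main : ∀ y : K, |f y - ∑ p : γ, αp p * σ (ωp p ⬝ᵥ (y : Fin d → ℝ) + ζp p)| < ε := by
    intro y
    have hsplit : ∑ p : γ, αp p * σ (ωp p ⬝ᵥ (y : Fin d → ℝ) + ζp p)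
        = ∑ j, lam j * ∑ i, c j i * σ (w j i * (a j ⬝ᵥ (y : Fin d → ℝ)) - θ j i) := by
      rw [← Finset.univ_sigma_univ, Finset.sum_sigma]
      refine Finset.sum_congr rfl fun j _ => ?_
      rw [Finset.mul_sum]
      refine Finset.sum_congr rfl fun i _ => ?_
      simp only [ωp, ζp, αp, smul_dotProduct, smul_eq_mul]
      ring_nf
    rw [hsplit]
    set T := ∑ j, lam j * ∑ i, c j i * σ (w j i * (a j ⬝ᵥ (y : Fin d → ℝ)) - θ j i) with hT
    set Emid := ∑ j, lam j * Real.exp (a j ⬝ᵥ (y : Fin d → ℝ)) with hEmid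
    have herr : ∀ j : Fin J,
        |lam j * Real.exp (a j ⬝ᵥ (y : Fin d → ℝ)) -
          lam j * ∑ i, c j i * σ (w j i * (a j ⬝ᵥ (y : Fin d → ℝ)) - θ j i)| ≤ |lam j| * ε' := by
      intro j
      rw [← mul_sub, abs_mul]
      exact mul_le_mul_of_nonneg_left (le_of_lt (hkey j _ (hAB j y))) (abs_nonneg _)
    have h2 : |Emid - T| ≤ S * ε' := by
      rw [hEmid, hT, ← Finset.sum_sub_distrib]
      refine (Finset.abs_sum_le_sum_abs _ _).trans ?_
      rw [hS, Finset.sum_mul]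
      exact Finset.sum_le_sum fun j _ => herr j
    have h3 : S * ε' ≤ ε / 2 := by
      have hne : S + 1 ≠ 0 := by linarith
      have h4 : (S + 1) * ε' = ε / 2 := by
        rw [hε']
        field_simp
      nlinarith [hε'pos.le]
    calc |f y - T| ≤ |f y - Emid| + |Emid - T| := abs_sub_le _ _ _
      _ < ε / 2 + S * ε' := add_lt_add_of_lt_of_le (hclose y) h2
      _ ≤ ε := by linarith
  -- reindex by Fin
  obtain ⟨N, e⟩ : ∃ N : ℕ, Nonempty (γ ≃ Fin N) := ⟨Fintype.card γ, ⟨Fintype.equivFin γ⟩⟩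
  obtain ⟨e⟩ := e
  refine ⟨N, fun i => ωp (e.symm i), fun i => ζp (e.symm i), fun i => αp (e.symm i), fun y => ?_⟩
  rw [Equiv.sum_comp e.symm fun p => αp p * σ (ωp p ⬝ᵥ (y : Fin d → ℝ) + ζp p)]
  exact main y


/-- Vector-valued ridge approximation of a single continuous map. -/
lemma ridge_dense_vec {m : ℕ} {σ : ℝ → ℝ} (hσ : TauberWiener σ)
    (g : C(K, Fin m → ℝ)) {ε : ℝ} (hε : 0 < ε) :
    ∃ (n : ℕ) (ω : Fin n → Fin d → ℝ) (ζ : Fin n → ℝ) (α : Fin n → Fin m → ℝ),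
      ∀ y : K, ‖g y - ∑ k, σ (ω k ⬝ᵥ (y : Fin d → ℝ) + ζ k) • α k‖ ≤ ε := by
  classical
  have hcoord : ∀ i : Fin m, ∃ (n : ℕ) (ω : Fin n → Fin d → ℝ) (ζ α : Fin n → ℝ),
      ∀ y : K, |g y i - ∑ k, α k * σ (ω k ⬝ᵥ (y : Fin d → ℝ) + ζ k)| < ε :=
    fun i => ridge_dense hσ ⟨fun y => g y i, (continuous_apply i).comp g.continuous⟩ hε
  choose n ω ζ a ha using hcoord
  set γ := (i : Fin m) × Fin (n i) with hγ
  set ωp : γ → Fin d → ℝ := fun p => ω p.1 p.2 with hωp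
  set ζp : γ → ℝ := fun p => ζ p.1 p.2 with hζp
  set αp : γ → Fin m → ℝ := fun p => Pi.single p.1 (a p.1 p.2) with hαp
  have main : ∀ y : K, ‖g y - ∑ p : γ, σ (ωp p ⬝ᵥ (y : Fin d → ℝ) + ζp p) • αp p‖ ≤ ε := by
    intro y
    rw [pi_norm_le_iff_of_nonneg hε.le]
    intro i
    have hco : (∑ p : γ, σ (ωp p ⬝ᵥ (y : Fin d → ℝ) + ζp p) • αp p) i
        = ∑ k, a i k * σ (ω i k ⬝ᵥ (y : Fin d → ℝ) + ζ i k) := by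
      rw [Finset.sum_apply]
      have hterm : ∀ p : γ, (σ (ωp p ⬝ᵥ (y : Fin d → ℝ) + ζp p) • αp p) i
          = if i = p.1 then a p.1 p.2 * σ (ω p.1 p.2 ⬝ᵥ (y : Fin d → ℝ) + ζ p.1 p.2) else 0 := by
        intro p
        simp only [Pi.smul_apply, smul_eq_mul, αp, Pi.single_apply]
        by_cases h : i = p.1 <;> simp [h, ωp, ζp, mul_comm]
      simp only [hterm]
      rw [← Finset.univ_sigma_univ, Finset.sum_sigma]
      rw [Finset.sum_eq_single i]
      · simp
      · intro i' _ hne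
        simp [Ne.symm hne]
      · intro habs
        exact absurd (Finset.mem_univ i) habs
    rw [Pi.sub_apply, hco, Real.norm_eq_abs]
    exact le_of_lt (ha i y)
  obtain ⟨N, ⟨e⟩⟩ : ∃ N : ℕ, Nonempty (γ ≃ Fin N) := ⟨Fintype.card γ, ⟨Fintype.equivFin γ⟩⟩
  refine ⟨N, fun i => ωp (e.symm i), fun i => ζp (e.symm i), fun i => αp (e.symm i), fun y => ?_⟩
  rw [Equiv.sum_comp e.symm fun p => σ (ωp p ⬝ᵥ (y : Fin d → ℝ) + ζp p) • αp p]
  exact main y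

end aux

/-- Uniform approximation of a compact family `W ⊆ C(K, ℝ^m)` by separable ridge
expansions with continuous coefficient maps. -/
theorem compact_family_ridge_approximation
    {d m : ℕ} (K : Set (Fin d → ℝ)) [CompactSpace K] (hK : IsCompact K)
    (σ : ℝ → ℝ) (hσcont : Continuous σ) (hσ : TauberWiener σ)
    (W : Set C(K, Fin m → ℝ)) (hW : IsCompact W)
    (δ : ℝ) (hδ : 0 < δ) :
    ∃ (N : ℕ), 1 ≤ N ∧
      ∃ (ω : Fin N → Fin d → ℝ) (ζ : Fin N → ℝ) (c : Fin N → C(W, Fin m → ℝ)),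
        ∀ (h : W) (y : K),
          ‖(h : C(K, Fin m → ℝ)) y -
            ∑ k, σ (ω k ⬝ᵥ (y : Fin d → ℝ) + ζ k) • c k h‖ ≤ 2 * δ := by
  classical
  suffices H : ∃ (n : ℕ) (ω : Fin n → Fin d → ℝ) (ζ : Fin n → ℝ) (c : Fin n → C(W, Fin m → ℝ)),
      ∀ (h : W) (y : K), ‖(h : C(K, Fin m → ℝ)) y -
        ∑ k, σ (ω k ⬝ᵥ (y : Fin d → ℝ) + ζ k) • c k h‖ ≤ 2 * δ by
    obtain ⟨n, ω, ζ, c, hc⟩ := H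
    refine ⟨n + 1, Nat.succ_le_succ (Nat.zero_le n),
      Fin.snoc ω 0, Fin.snoc ζ 0, Fin.snoc c 0, fun h y => ?_⟩
    rw [Fin.sum_univ_castSucc]
    simp only [Fin.snoc_castSucc, Fin.snoc_last, ContinuousMap.zero_apply, smul_zero, add_zero]
    exact hc h y
  rcases Set.eq_empty_or_nonempty W with hWe | hWne
  · refine ⟨0, Fin.elim0, Fin.elim0, Fin.elim0, fun h y => ?_⟩
    obtain ⟨x, hx⟩ := h
    rw [hWe] at hx
    exact (Set.notMem_empty _ hx).elim
  obtain ⟨t, ht⟩ := hW.elim_finite_subcover (fun g : C(K, Fin m → ℝ) => Metric.ball g δ)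
    (fun g => Metric.isOpen_ball) (fun h hh => Set.mem_iUnion.2 ⟨h, Metric.mem_ball_self hδ⟩)
  have hcover : ∀ h : W, ∃ g ∈ t, dist (h : C(K, Fin m → ℝ)) g < δ := by
    intro h
    obtain ⟨g, hg, hmem⟩ := Set.mem_iUnion₂.1 (ht h.2)
    exact ⟨g, hg, hmem⟩
  have happrox : ∀ g : ↥t, ∃ (n : ℕ) (ω : Fin n → Fin d → ℝ) (ζ : Fin n → ℝ)
      (α : Fin n → Fin m → ℝ), ∀ y : K,
        ‖(g : C(K, Fin m → ℝ)) y - ∑ k, σ (ω k ⬝ᵥ (y : Fin d → ℝ) + ζ k) • α k‖ ≤ δ :=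
    fun g => ridge_dense_vec hσ (g : C(K, Fin m → ℝ)) hδ
  choose n ω ζ α hα using happrox
  -- partition of unity on W subordinate to the balls around centers in t
  set φ : ↥t → W → ℝ :=
    fun g h => max (δ - dist (h : C(K, Fin m → ℝ)) (g : C(K, Fin m → ℝ))) 0 with hφ
  have hφnn : ∀ g h, 0 ≤ φ g h := fun g h => le_max_right _ _
  set D : W → ℝ := fun h => ∑ g : ↥t, φ g h with hD
  have hDpos : ∀ h : W, 0 < D h := by
    intro h
    obtain ⟨g, hg, hlt⟩ := hcover h
    refine Finset.sum_pos' (fun g _ => hφnn g h) ⟨⟨g, hg⟩, Finset.mem_univ _, ?_⟩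
    exact lt_of_lt_of_le (by simpa using hlt) (le_max_left _ _)
  set ψ : ↥t → W → ℝ := fun g h => φ g h / D h with hψ
  have hψnn : ∀ g h, 0 ≤ ψ g h := fun g h => div_nonneg (hφnn g h) (hDpos h).le
  have hψsum : ∀ h, ∑ g : ↥t, ψ g h = 1 := by
    intro h
    simp only [hψ]
    rw [← Finset.sum_div]
    exact div_self (hDpos h).ne'
  have hφcont : ∀ g : ↥t, Continuous fun h : W => φ g h := fun g =>
    (continuous_const.sub (continuous_subtype_val.dist continuous_const)).max continuous_const
  have hDcont : Continuous fun h : W => D h := continuous_finset_sum _ fun g _ => hφcont g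
  have hψcont : ∀ g : ↥t, Continuous fun h : W => ψ g h :=
    fun g => (hφcont g).div hDcont fun h => (hDpos h).ne'
  set R : ↥t → K → Fin m → ℝ :=
    fun g y => ∑ k, σ (ω g k ⬝ᵥ (y : Fin d → ℝ) + ζ g k) • α g k with hR
  set γ := (g : ↥t) × Fin (n g) with hγ
  set ωp : γ → Fin d → ℝ := fun p => ω p.1 p.2 with hωp
  set ζp : γ → ℝ := fun p => ζ p.1 p.2 with hζp
  set cp : γ → C(W, Fin m → ℝ) := fun p =>
    ⟨fun h => ψ p.1 h • α p.1 p.2, (hψcont p.1).smul continuous_const⟩ with hcp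
  have main : ∀ (h : W) (y : K),
      ‖(h : C(K, Fin m → ℝ)) y - ∑ p : γ, σ (ωp p ⬝ᵥ (y : Fin d → ℝ) + ζp p) • cp p h‖
        ≤ 2 * δ := by
    intro h y
    have hsplit : ∑ p : γ, σ (ωp p ⬝ᵥ (y : Fin d → ℝ) + ζp p) • cp p h
        = ∑ g : ↥t, ψ g h • R g y := by
      rw [← Finset.univ_sigma_univ, Finset.sum_sigma]
      refine Finset.sum_congr rfl fun g _ => ?_
      simp only [hR, Finset.smul_sum]
      refine Finset.sum_congr rfl fun k _ => ?_
      simp only [cp, ContinuousMap.coe_mk, ωp, ζp]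
      rw [smul_comm]
    have hexp : (h : C(K, Fin m → ℝ)) y = ∑ g : ↥t, ψ g h • (h : C(K, Fin m → ℝ)) y := by
      rw [← Finset.sum_smul, hψsum, one_smul]
    rw [hsplit, hexp, ← Finset.sum_sub_distrib]
    refine (norm_sum_le _ _).trans ?_
    have hterm : ∀ g : ↥t,
        ‖ψ g h • (h : C(K, Fin m → ℝ)) y - ψ g h • R g y‖ ≤ ψ g h * (2 * δ) := by
      intro g
      rw [← smul_sub, norm_smul, Real.norm_eq_abs, abs_of_nonneg (hψnn g h)]
      by_cases hz : φ g h = 0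
      · have hz' : ψ g h = 0 := by simp only [hψ]; rw [hz]; simp
        rw [hz']
        simp
      · refine mul_le_mul_of_nonneg_left ?_ (hψnn g h)
        have hdlt : dist (h : C(K, Fin m → ℝ)) (g : C(K, Fin m → ℝ)) < δ := by
          by_contra hcon
          push_neg at hcon
          exact hz (by simp only [hφ]; rw [max_eq_right (by linarith)])
        have h1 : ‖(h : C(K, Fin m → ℝ)) y - (g : C(K, Fin m → ℝ)) y‖ ≤ δ := by
          rw [← dist_eq_norm]
          exact (ContinuousMap.dist_apply_le_dist y).trans hdlt.le
        have h2 : ‖(g : C(K, Fin m → ℝ)) y - R g y‖ ≤ δ := hα g y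
        calc ‖(h : C(K, Fin m → ℝ)) y - R g y‖
            ≤ ‖(h : C(K, Fin m → ℝ)) y - (g : C(K, Fin m → ℝ)) y‖
              + ‖(g : C(K, Fin m → ℝ)) y - R g y‖ := by
              have := dist_triangle ((h : C(K, Fin m → ℝ)) y)
                ((g : C(K, Fin m → ℝ)) y) (R g y)
              simpa [dist_eq_norm] using this
          _ ≤ 2 * δ := by linarith
    calc ∑ g : ↥t, ‖ψ g h • (h : C(K, Fin m → ℝ)) y - ψ g h • R g y‖
        ≤ ∑ g : ↥t, ψ g h * (2 * δ) := Finset.sum_le_sum fun g _ => hterm g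
      _ = 2 * δ := by rw [← Finset.sum_mul, hψsum, one_mul]
  obtain ⟨N, ⟨e⟩⟩ : ∃ N : ℕ, Nonempty (γ ≃ Fin N) := ⟨Fintype.card γ, ⟨Fintype.equivFin γ⟩⟩
  refine ⟨N, fun i => ωp (e.symm i), fun i => ζp (e.symm i), fun i => cp (e.symm i), fun h y => ?_⟩
  rw [Equiv.sum_comp e.symm fun p => σ (ωp p ⬝ᵥ (y : Fin d → ℝ) + ζp p) • cp p h]
  exact main h y
end

section
/- (DeepONet corollary, scalar output) Let E be a Banach space, K₁ ⊆ E and K₂ ⊂ ℝ^d compact, V ⊆ C(K₁, ℝ) compact in the sup norm, G : V → C(K₂, ℝ) a continuous operator, and σ a continuous Tauber–Wiener function. Then for every ε > 0 there exist integers n, p, r ≥ 1, points x₁, …, x_r ∈ K₁, reals c_{ki}, θ_{ki}, ξ_{kij}, ζ_k, and vectors ω_k ∈ ℝ^d such that |G(u)(y) − Σ_{k=1}^p Σ_{i=1}^n c_{ki} σ(Σ_{j=1}^r ξ_{kij} u(xⱼ) − θ_{ki}) σ(ω_k·y + ζ_k)| < ε for all u ∈ V and y ∈ K₂. -/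
open Matrix
set_option maxHeartbeats 2000000

/-- A one-hidden-layer `σ`-network on `ℝ^m`. -/
def NetFn (σ : ℝ → ℝ) (m : ℕ) (h : (Fin m → ℝ) → ℝ) : Prop :=
  ∃ (N : ℕ) (c b : Fin N → ℝ) (w : Fin N → Fin m → ℝ),
    ∀ z, h z = ∑ i, c i * σ (w i ⬝ᵥ z + b i)

lemma netFn_zero (σ : ℝ → ℝ) (m : ℕ) : NetFn σ m 0 :=
  ⟨0, ![], ![], ![], fun z => by simp⟩

lemma netFn_add {σ : ℝ → ℝ} {m : ℕ} {h₁ h₂ : (Fin m → ℝ) → ℝ}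
    (H₁ : NetFn σ m h₁) (H₂ : NetFn σ m h₂) : NetFn σ m (h₁ + h₂) := by
  obtain ⟨N₁, c₁, b₁, w₁, e₁⟩ := H₁
  obtain ⟨N₂, c₂, b₂, w₂, e₂⟩ := H₂
  refine ⟨N₁ + N₂, Fin.append c₁ c₂, Fin.append b₁ b₂, Fin.append w₁ w₂, fun z => ?_⟩
  rw [Fin.sum_univ_add]
  simp only [Fin.append_left, Fin.append_right]
  rw [Pi.add_apply, e₁ z, e₂ z]

lemma netFn_smul {σ : ℝ → ℝ} {m : ℕ} (a : ℝ) {h : (Fin m → ℝ) → ℝ}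
    (H : NetFn σ m h) : NetFn σ m (a • h) := by
  obtain ⟨N, c, b, w, e⟩ := H
  refine ⟨N, a • c, b, w, fun z => ?_⟩
  rw [Pi.smul_apply, e z, Finset.smul_sum]
  simp [mul_assoc]

lemma netFn_continuous {σ : ℝ → ℝ} (hσ : Continuous σ) {m : ℕ} {h : (Fin m → ℝ) → ℝ}
    (H : NetFn σ m h) : Continuous h := by
  obtain ⟨N, c, b, w, e⟩ := H
  have : h = fun z => ∑ i, c i * σ (w i ⬝ᵥ z + b i) := funext e
  rw [this]
  refine continuous_finset_sum _ fun i _ => ?_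
  exact (continuous_const.mul (hσ.comp ((continuous_const.dotProduct continuous_id').add continuous_const)))


section Ridge
variable {m : ℕ} (K : Set (Fin m → ℝ))

/-- A cosine ridge function on `K`. -/
noncomputable def cosRidge (w : Fin m → ℝ) (ζ : ℝ) : C(K, ℝ) :=
  ⟨fun z => Real.cos (w ⬝ᵥ (z : Fin m → ℝ) + ζ),
    (Real.continuous_cos.comp
      ((continuous_const.dotProduct continuous_id').add continuous_const)).comp
      continuous_subtype_val⟩

lemma cosRidge_apply (w : Fin m → ℝ) (ζ : ℝ) (z : K) :
    cosRidge K w ζ z = Real.cos (w ⬝ᵥ (z : Fin m → ℝ) + ζ) := rfl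

/-- The set of cosine ridge functions on `K`. -/
def cosRidgeSet : Set C(K, ℝ) :=
  {g | ∃ w ζ, g = cosRidge K w ζ}

lemma cosRidge_mul_cosRidge (w w' : Fin m → ℝ) (ζ ζ' : ℝ) :
    cosRidge K w ζ * cosRidge K w' ζ' =
      (1/2 : ℝ) • cosRidge K (w + w') (ζ + ζ') + (1/2 : ℝ) • cosRidge K (w - w') (ζ - ζ') := by
  ext z
  simp only [ContinuousMap.mul_apply, ContinuousMap.add_apply, ContinuousMap.smul_apply,
    cosRidge_apply, smul_eq_mul, add_dotProduct, sub_dotProduct]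
  have h1 := Real.cos_add (w ⬝ᵥ (z : Fin m → ℝ) + ζ) (w' ⬝ᵥ (z : Fin m → ℝ) + ζ')
  have h2 := Real.cos_sub (w ⬝ᵥ (z : Fin m → ℝ) + ζ) (w' ⬝ᵥ (z : Fin m → ℝ) + ζ')
  have e1 : w ⬝ᵥ (z : Fin m → ℝ) + w' ⬝ᵥ (z : Fin m → ℝ) + (ζ + ζ')
      = (w ⬝ᵥ (z : Fin m → ℝ) + ζ) + (w' ⬝ᵥ (z : Fin m → ℝ) + ζ') := by ring
  have e2 : w ⬝ᵥ (z : Fin m → ℝ) - w' ⬝ᵥ (z : Fin m → ℝ) + (ζ - ζ')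
      = (w ⬝ᵥ (z : Fin m → ℝ) + ζ) - (w' ⬝ᵥ (z : Fin m → ℝ) + ζ') := by ring
  rw [e1, e2, h1, h2]; ring

/-- The span of cosine ridge functions is a subalgebra. -/
noncomputable def cosRidgeAlg : Subalgebra ℝ C(K, ℝ) :=
  (Submodule.span ℝ (cosRidgeSet K)).toSubalgebra
    (by
      apply Submodule.subset_span
      refine ⟨0, 0, ?_⟩
      ext z; simp [cosRidge_apply])
    (by
      intro f g hf hg
      have key : ∀ a ∈ cosRidgeSet K, ∀ b ∈ cosRidgeSet K,
          a * b ∈ Submodule.span ℝ (cosRidgeSet K) := by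
        rintro a ⟨w, ζ, rfl⟩ b ⟨w', ζ', rfl⟩
        rw [cosRidge_mul_cosRidge]
        exact Submodule.add_mem _
          (Submodule.smul_mem _ _ (Submodule.subset_span ⟨_, _, rfl⟩))
          (Submodule.smul_mem _ _ (Submodule.subset_span ⟨_, _, rfl⟩))
      induction hf using Submodule.span_induction with
      | mem a ha =>
        induction hg using Submodule.span_induction with
        | mem b hb => exact key _ ha _ hb
        | zero => simpa using Submodule.zero_mem _
        | add b₁ b₂ _ _ h1 h2 => rw [mul_add]; exact Submodule.add_mem _ h1 h2
        | smul r b _ h => rw [mul_smul_comm]; exact Submodule.smul_mem _ _ h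
      | zero => simpa using Submodule.zero_mem _
      | add a₁ a₂ _ _ h1 h2 => rw [add_mul]; exact Submodule.add_mem _ h1 h2
      | smul r a _ h => rw [smul_mul_assoc]; exact Submodule.smul_mem _ _ h)

lemma cosRidgeAlg_separatesPoints : (cosRidgeAlg K).SeparatesPoints := by
  intro x y hxy
  have hne : ∃ j, (x : Fin m → ℝ) j ≠ (y : Fin m → ℝ) j := by
    by_contra h
    push_neg at h
    exact hxy (Subtype.ext (funext h))
  obtain ⟨j, hj⟩ := hne
  set a := (x : Fin m → ℝ) j with ha
  set b := (y : Fin m → ℝ) j with hb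
  set t : ℝ := Real.pi / (2 * (|a| + |b| + 1)) with ht
  have hden : (0:ℝ) < |a| + |b| + 1 := by positivity
  have ht0 : 0 < t := by
    apply div_pos Real.pi_pos; positivity
  set w : Fin m → ℝ := fun i => if i = j then t else 0 with hw
  have hdot : ∀ z : K, w ⬝ᵥ (z : Fin m → ℝ) = t * (z : Fin m → ℝ) j := by
    intro z
    simp only [hw, dotProduct]
    rw [Finset.sum_eq_single j]
    · simp
    · intro i _ hij; simp [hij]
    · simp
  refine ⟨⇑(cosRidge K w (Real.pi/2)), ⟨⟨cosRidge K w (Real.pi/2),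
    Submodule.mem_toSubalgebra.mpr (Submodule.subset_span ⟨w, _, rfl⟩), rfl⟩, ?_⟩⟩
  simp only [cosRidge_apply, hdot]
  have hbound : ∀ c : ℝ, |c| ≤ |a| + |b| → t * c + Real.pi/2 ∈ Set.Icc 0 Real.pi := by
    intro c hc
    have h1 : |t * c| ≤ Real.pi / 2 * ((|a| + |b|) / (|a| + |b| + 1)) := by
      rw [abs_mul, abs_of_pos ht0, ht]
      have heq : Real.pi / 2 * ((|a| + |b|) / (|a| + |b| + 1))
          = Real.pi / (2 * (|a| + |b| + 1)) * (|a| + |b|) := by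
        field_simp
      rw [heq]
      exact mul_le_mul_of_nonneg_left hc (by positivity)
    have h2 : Real.pi / 2 * ((|a| + |b|) / (|a| + |b| + 1)) < Real.pi / 2 := by
      have : (|a| + |b|) / (|a| + |b| + 1) < 1 := by
        rw [div_lt_one hden]; linarith
      nlinarith [Real.pi_pos]
    have := abs_lt.mp (lt_of_le_of_lt h1 h2)
    constructor <;> [linarith [this.1]; linarith [this.2, Real.pi_pos]]
  have hAmem := hbound a (by linarith [abs_nonneg b])
  have hBmem := hbound b (by linarith [abs_nonneg a])
  intro h
  have := Real.injOn_cos hAmem hBmem h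
  have : a = b := by
    have h' : t * a = t * b := by linarith
    exact mul_left_cancel₀ (ne_of_gt ht0) h'
  exact hj this

end Ridge

/-- Multivariate universal approximation from the Tauber–Wiener property. -/
lemma mv_universal_approx {σ : ℝ → ℝ} (hσc : Continuous σ) (hσ : TauberWiener σ)
    {m : ℕ} (K : Set (Fin m → ℝ)) (hK : IsCompact K) (f : C(K, ℝ)) (ε : ℝ) (hε : 0 < ε) :
    ∃ h : (Fin m → ℝ) → ℝ, NetFn σ m h ∧ ∀ z : K, |f z - h (z : Fin m → ℝ)| < ε := by
  haveI : CompactSpace K := isCompact_iff_compactSpace.mp hK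
  set Appr : Set C(K, ℝ) :=
    {g | ∀ δ : ℝ, 0 < δ → ∃ h, NetFn σ m h ∧ ∀ z : K, |g z - h (z : Fin m → ℝ)| ≤ δ} with hA
  have hgen : cosRidgeSet K ⊆ Appr := by
    rintro g ⟨w, ζ, rfl⟩ δ hδ
    obtain ⟨C, hC⟩ := hK.exists_bound_of_continuousOn
      (f := fun z => w ⬝ᵥ z + ζ)
      (((continuous_const.dotProduct continuous_id').add continuous_const).continuousOn)
    obtain ⟨N, c, v, θ, hcos⟩ := hσ (-|C|) |C| Real.cos Real.continuous_cos.continuousOn δ hδ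
    refine ⟨fun z => ∑ i, c i * σ ((v i • w) ⬝ᵥ z + (v i * ζ - θ i)),
      ⟨N, c, fun i => v i * ζ - θ i, fun i => v i • w, fun z => rfl⟩, fun z => ?_⟩
    have hz : w ⬝ᵥ (z : Fin m → ℝ) + ζ ∈ Set.Icc (-|C|) |C| := by
      have := hC (z : Fin m → ℝ) z.2
      rw [Real.norm_eq_abs] at this
      have h' := abs_le.mp (this.trans (le_abs_self C))
      exact ⟨h'.1, h'.2⟩
    have hterm : (∑ i, c i * σ ((v i • w) ⬝ᵥ (z : Fin m → ℝ) + (v i * ζ - θ i)))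
        = ∑ i, c i * σ (v i * (w ⬝ᵥ (z : Fin m → ℝ) + ζ) - θ i) := by
      refine Finset.sum_congr rfl fun i _ => ?_
      congr 2
      rw [smul_dotProduct]
      simp only [smul_eq_mul]
      ring
    refine le_of_lt ?_
    show |Real.cos (w ⬝ᵥ (z : Fin m → ℝ) + ζ)
        - ∑ i, c i * σ ((v i • w) ⬝ᵥ (z : Fin m → ℝ) + (v i * ζ - θ i))| < δ
    rw [hterm]
    exact hcos _ hz
  have hspan : ∀ g ∈ Submodule.span ℝ (cosRidgeSet K), g ∈ Appr := by
    intro g hg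
    induction hg using Submodule.span_induction with
    | mem a ha => exact hgen ha
    | zero =>
      intro δ hδ
      exact ⟨0, netFn_zero σ m, fun z => by simp [le_of_lt hδ]⟩
    | add a b _ _ ha hb =>
      intro δ hδ
      obtain ⟨h₁, hn₁, he₁⟩ := ha (δ/2) (by linarith)
      obtain ⟨h₂, hn₂, he₂⟩ := hb (δ/2) (by linarith)
      refine ⟨h₁ + h₂, netFn_add hn₁ hn₂, fun z => ?_⟩
      have := abs_add_le ((a z) - h₁ z) ((b z) - h₂ z)
      simp only [ContinuousMap.add_apply, Pi.add_apply]
      calc |a z + b z - (h₁ ↑z + h₂ ↑z)| = |(a z - h₁ ↑z) + (b z - h₂ ↑z)| := by ring_nf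
        _ ≤ |a z - h₁ ↑z| + |b z - h₂ ↑z| := abs_add_le _ _
        _ ≤ δ/2 + δ/2 := add_le_add (he₁ z) (he₂ z)
        _ = δ := by ring
    | smul r a _ ha =>
      intro δ hδ
      obtain ⟨h, hn, he⟩ := ha (δ/(|r|+1)) (by positivity)
      refine ⟨r • h, netFn_smul r hn, fun z => ?_⟩
      simp only [ContinuousMap.smul_apply, Pi.smul_apply, smul_eq_mul]
      calc |r * a z - r * h ↑z| = |r| * |a z - h ↑z| := by rw [← abs_mul]; ring_nf
        _ ≤ |r| * (δ/(|r|+1)) := mul_le_mul_of_nonneg_left (he z) (abs_nonneg r)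
        _ ≤ δ := by
            rw [mul_div_assoc']
            rw [div_le_iff₀ (by positivity)]
            nlinarith [abs_nonneg r]
  obtain ⟨g, hg⟩ := ContinuousMap.exists_mem_subalgebra_near_continuousMap_of_separatesPoints
    (cosRidgeAlg K) (cosRidgeAlg_separatesPoints K) f (ε/2) (by linarith)
  have hgA : (g : C(K, ℝ)) ∈ Appr := hspan _ (Submodule.mem_toSubalgebra.mp g.2)
  obtain ⟨h, hn, he⟩ := hgA (ε/4) (by linarith)
  refine ⟨h, hn, fun z => ?_⟩
  have h1 : |f z - (g : C(K, ℝ)) z| ≤ ‖(g : C(K, ℝ)) - f‖ := by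
    rw [abs_sub_comm]
    exact ((g : C(K, ℝ)) - f).norm_coe_le_norm z
  calc |f z - h ↑z| ≤ |f z - (g : C(K, ℝ)) z| + |(g : C(K, ℝ)) z - h ↑z| := abs_sub_le _ _ _
    _ ≤ ‖(g : C(K, ℝ)) - f‖ + ε/4 := add_le_add h1 (he z)
    _ < ε/2 + ε/4 := by linarith [hg]
    _ < ε := by linarith

/-- Every nonempty compact set in a metric space has a finite internal `ρ`-net. -/
lemma exists_net {α : Type*} [MetricSpace α] {s : Set α} (hs : IsCompact s)
    (hne : s.Nonempty) {ρ : ℝ} (hρ : 0 < ρ) :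
    ∃ (n : ℕ) (v : Fin n → α), 1 ≤ n ∧ (∀ i, v i ∈ s) ∧ ∀ x ∈ s, ∃ i, dist x (v i) < ρ := by
  obtain ⟨t, hts, htf, hcover⟩ := totallyBounded_iff_subset.mp hs.totallyBounded
    _ (Metric.dist_mem_uniformity hρ)
  have htn : t.Nonempty := by
    obtain ⟨x₀, hx₀⟩ := hne
    obtain ⟨y, hy, -⟩ := Set.mem_iUnion₂.mp (hcover hx₀)
    exact ⟨y, hy⟩
  classical
  set ft : Finset α := htf.toFinset with hft
  have hftn : ft.Nonempty := by
    obtain ⟨y, hy⟩ := htn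
    exact ⟨y, htf.mem_toFinset.mpr hy⟩
  refine ⟨ft.card, fun i => (ft.equivFin.symm i : α), Finset.card_pos.mpr hftn, ?_, ?_⟩
  · intro i
    exact hts (htf.mem_toFinset.mp (ft.equivFin.symm i).2)
  · intro x hx
    obtain ⟨y, hy, hxy⟩ := Set.mem_iUnion₂.mp (hcover hx)
    refine ⟨ft.equivFin ⟨y, htf.mem_toFinset.mpr hy⟩, ?_⟩
    simpa using hxy

/-- A compact set of continuous functions on a compact metric space is
(uniformly) equicontinuous. -/
lemma compact_equicontinuous {X : Type*} [MetricSpace X] [CompactSpace X]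
    {V : Set C(X, ℝ)} (hV : IsCompact V) {δ : ℝ} (hδ : 0 < δ) :
    ∃ η > 0, ∀ u ∈ V, ∀ x x' : X, dist x x' < η → |u x - u x'| < δ := by
  haveI : CompactSpace ↥V := isCompact_iff_compactSpace.mp hV
  have hF : Continuous fun p : ↥V × X => (p.1 : C(X, ℝ)) p.2 := by
    have h1 : Continuous fun p : C(X, ℝ) × X => p.1 p.2 := continuous_eval
    exact h1.comp ((continuous_subtype_val.comp continuous_fst).prodMk continuous_snd)
  have hUC := CompactSpace.uniformContinuous_of_continuous hF
  rw [Metric.uniformContinuous_iff] at hUC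
  obtain ⟨η, hη, hF'⟩ := hUC δ hδ
  refine ⟨η, hη, fun u hu x x' hxx => ?_⟩
  have hd : dist ((⟨u, hu⟩, x) : ↥V × X) (⟨u, hu⟩, x') < η := by
    rw [Prod.dist_eq]
    simp only [dist_self]
    exact max_lt hη hxx
  have := hF' hd
  simpa [Real.dist_eq] using this

/-- Padding a network with zero neurons. -/
lemma netFn_pad (σ : ℝ → ℝ) {m : ℕ} {N L : ℕ} (hNL : N ≤ L)
    (c b : Fin N → ℝ) (w : Fin N → Fin m → ℝ) :
    ∃ (c' b' : Fin L → ℝ) (w' : Fin L → Fin m → ℝ), ∀ z : Fin m → ℝ,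
      ∑ i : Fin L, c' i * σ (w' i ⬝ᵥ z + b' i) = ∑ i : Fin N, c i * σ (w i ⬝ᵥ z + b i) := by
  classical
  refine ⟨fun l => if h : (l : ℕ) < N then c ⟨l, h⟩ else 0,
          fun l => if h : (l : ℕ) < N then b ⟨l, h⟩ else 0,
          fun l => if h : (l : ℕ) < N then w ⟨l, h⟩ else 0, fun z => ?_⟩
  set f : ℕ → ℝ := fun l =>
    (if h : l < N then c ⟨l, h⟩ else 0) *
      σ ((if h : l < N then w ⟨l, h⟩ else 0) ⬝ᵥ z + (if h : l < N then b ⟨l, h⟩ else 0)) with hf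
  have h1 : (∑ i : Fin L, (if h : (i : ℕ) < N then c ⟨i, h⟩ else 0) *
      σ ((if h : (i : ℕ) < N then w ⟨i, h⟩ else 0) ⬝ᵥ z +
        (if h : (i : ℕ) < N then b ⟨i, h⟩ else 0))) = ∑ l ∈ Finset.range L, f l :=
    Fin.sum_univ_eq_sum_range f L
  have h2 : ∑ l ∈ Finset.range N, f l = ∑ l ∈ Finset.range L, f l := by
    apply Finset.sum_subset (Finset.range_subset_range.mpr hNL)
    intro l _ hl
    have : ¬ l < N := by simpa using hl
    simp [hf, this]
  have h3 : (∑ i : Fin N, c i * σ (w i ⬝ᵥ z + b i)) = ∑ l ∈ Finset.range N, f l := by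
    rw [← Fin.sum_univ_eq_sum_range f N]
    apply Finset.sum_congr rfl
    intro i _
    simp [hf, i.isLt, Fin.eta]
  rw [h1, h3, h2]

/-- DeepONet corollary (scalar output, Chen–Chen/Lu form): explicit branch–trunk
approximation with sensor values `u(x₁), …, u(x_r)` and ridge trunk factors. -/
theorem deeponet_scalar_corollary
    {E : Type*} [NormedAddCommGroup E] [NormedSpace ℝ E]
    {d : ℕ} (K₁ : Set E) [CompactSpace K₁] [Nonempty K₁] (hK₁ : IsCompact K₁)
    (K₂ : Set (Fin d → ℝ)) [CompactSpace K₂] (hK₂ : IsCompact K₂)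
    (V : Set C(K₁, ℝ)) (hV : IsCompact V)
    (G : V → C(K₂, ℝ)) (hG : Continuous G)
    (σ : ℝ → ℝ) (hσcont : Continuous σ) (hσ : TauberWiener σ)
    (ε : ℝ) (hε : 0 < ε) :
    ∃ (n p r : ℕ), 1 ≤ n ∧ 1 ≤ p ∧ 1 ≤ r ∧
      ∃ (x : Fin r → K₁) (c θ : Fin p → Fin n → ℝ)
        (ξ : Fin p → Fin n → Fin r → ℝ) (ζ : Fin p → ℝ) (ω : Fin p → Fin d → ℝ),
        ∀ (u : V) (y : K₂),
          |G u y -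
            ∑ k, ∑ i, c k i *
              σ (∑ j, ξ k i j * (u : C(K₁, ℝ)) (x j) - θ k i) *
              σ (ω k ⬝ᵥ (y : Fin d → ℝ) + ζ k)| < ε := by
  classical
  by_cases hne : V.Nonempty
  swap
  · refine ⟨1, 1, 1, le_refl 1, le_refl 1, le_refl 1,
      fun _ => Classical.arbitrary K₁, 0, 0, 0, 0, 0, fun u y => ?_⟩
    exact absurd ⟨(u : C(K₁, ℝ)), u.2⟩ hne
  haveI : CompactSpace ↥V := isCompact_iff_compactSpace.mp hV
  -- uniform continuity of G
  have hGu := CompactSpace.uniformContinuous_of_continuous hG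
  rw [Metric.uniformContinuous_iff] at hGu
  obtain ⟨δ, hδ, hGδ⟩ := hGu (ε/4) (by linarith)
  -- equicontinuity of V
  obtain ⟨η, hη, hequi⟩ := compact_equicontinuous hV (show (0:ℝ) < δ/6 by linarith)
  -- sensor points: η-net of K₁
  obtain ⟨r, x, hr, -, hxcov⟩ := exists_net (isCompact_univ (X := ↥K₁)) Set.univ_nonempty hη
  -- a δ/3-net of V
  obtain ⟨mm, uc, hmm, hucV, huccov⟩ := exists_net hV hne (show (0:ℝ) < δ/3 by linarith)
  -- sensor map
  have hScont : Continuous (fun (u : C(K₁, ℝ)) (j : Fin r) => u (x j)) :=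
    continuous_pi fun j => continuous_eval_const (x j)
  set S : C(K₁, ℝ) → (Fin r → ℝ) := fun u j => u (x j) with hSdef
  have hSdist : ∀ u v : C(K₁, ℝ), dist (S u) (S v) ≤ dist u v := by
    intro u v
    rw [dist_pi_le_iff dist_nonneg]
    intro j
    exact ContinuousMap.dist_apply_le_dist (x j)
  have hkey : ∀ u ∈ V, ∀ v ∈ V, dist (S u) (S v) < δ/3 → dist u v < δ := by
    intro u hu v hv hsv
    rw [ContinuousMap.dist_lt_iff hδ]
    intro z
    obtain ⟨j, hj⟩ := hxcov z (Set.mem_univ z)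
    have h1 : |u z - u (x j)| < δ/6 := hequi u hu z (x j) hj
    have h2 : |v z - v (x j)| < δ/6 := hequi v hv z (x j) hj
    have h3 : |u (x j) - v (x j)| ≤ dist (S u) (S v) := by
      have := dist_le_pi_dist (S u) (S v) j
      rwa [Real.dist_eq] at this
    rw [Real.dist_eq]
    have habc : |u z - v z| ≤ |u z - u (x j)| + |u (x j) - v (x j)| + |v (x j) - v z| := by
      have t1 := abs_sub_le (u z) (u (x j)) (v z)
      have t2 := abs_sub_le (u (x j)) (v (x j)) (v z)
      linarith
    have h2' : |v (x j) - v z| < δ/6 := by rwa [abs_sub_comm] at h2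
    linarith
  -- bump functions on sensor space
  set φ : Fin mm → (Fin r → ℝ) → ℝ := fun k z => max (δ/3 - dist z (S (uc k))) 0 with hφdef
  have hφcont : ∀ k, Continuous (φ k) := fun k =>
    (continuous_const.sub (continuous_id.dist continuous_const)).max continuous_const
  have hφnn : ∀ k z, 0 ≤ φ k z := fun k z => le_max_right _ _
  have hφpos : ∀ u ∈ V, ∃ k, 0 < φ k (S u) := by
    intro u hu
    obtain ⟨k, hk⟩ := huccov u hu
    have := lt_of_le_of_lt (hSdist u (uc k)) hk
    exact ⟨k, lt_max_iff.mpr (Or.inl (by linarith))⟩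
  have hφsupp : ∀ u ∈ V, ∀ k, 0 < φ k (S u) → dist u (uc k) < δ := by
    intro u hu k hk
    rcases lt_max_iff.mp hk with h | h
    · exact hkey u hu (uc k) (hucV k) (by linarith)
    · exact absurd h (lt_irrefl 0)
  -- normalization
  set Φ : (Fin r → ℝ) → ℝ := fun z => ∑ k, φ k z with hΦdef
  have hΦcont : Continuous Φ := continuous_finset_sum _ fun k _ => hφcont k
  have hΦpos : ∀ u ∈ V, 0 < Φ (S u) := by
    intro u hu
    obtain ⟨k, hk⟩ := hφpos u hu
    exact Finset.sum_pos' (fun k _ => hφnn k _) ⟨k, Finset.mem_univ k, hk⟩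
  obtain ⟨u₀, hu₀, hmin⟩ := hV.exists_isMinOn hne ((hΦcont.comp hScont).continuousOn)
  set c₀ : ℝ := Φ (S u₀) with hc₀def
  have hc₀ : 0 < c₀ := hΦpos u₀ hu₀
  have hc₀le : ∀ u ∈ V, c₀ ≤ Φ (S u) := fun u hu => isMinOn_iff.mp hmin u hu
  set Ψ : Fin mm → (Fin r → ℝ) → ℝ := fun k z => φ k z / max (Φ z) c₀ with hΨdef
  have hdenpos : ∀ z, 0 < max (Φ z) c₀ := fun z => lt_of_lt_of_le hc₀ (le_max_right _ _)
  have hΨcont : ∀ k, Continuous (Ψ k) := fun k =>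
    (hφcont k).div (hΦcont.max continuous_const) fun z => ne_of_gt (hdenpos z)
  have hΨnn : ∀ k z, 0 ≤ Ψ k z := fun k z => div_nonneg (hφnn k z) (le_of_lt (hdenpos z))
  have hΨsum : ∀ u ∈ V, ∑ k, Ψ k (S u) = 1 := by
    intro u hu
    have hmax : max (Φ (S u)) c₀ = Φ (S u) := max_eq_left (hc₀le u hu)
    simp only [hΨdef, hmax, ← Finset.sum_div]
    exact div_self (ne_of_gt (hΦpos u hu))
  have hΨsupp : ∀ u ∈ V, ∀ k, Ψ k (S u) ≠ 0 → dist u (uc k) < δ := by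
    intro u hu k hk
    apply hφsupp u hu k
    rcases lt_or_eq_of_le (hφnn k (S u)) with h | h
    · exact h
    · exact absurd (by rw [hΨdef]; simp [← h]) hk
  -- trunk networks
  have htr : ∀ k : Fin mm, ∃ h, NetFn σ d h ∧
      ∀ y : K₂, |(G ⟨uc k, hucV k⟩) y - h (y : Fin d → ℝ)| < ε/4 := fun k =>
    mv_universal_approx hσcont hσ K₂ hK₂ (G ⟨uc k, hucV k⟩) (ε/4) (by linarith)
  choose T hTnet hTapx using htr
  choose L βt bt wt hTeq using hTnet
  set L0 : ℕ := max 1 (Finset.univ.sup L) with hL0def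
  have hL01 : 1 ≤ L0 := le_max_left _ _
  have hLle : ∀ k, L k ≤ L0 := fun k =>
    le_trans (Finset.le_sup (Finset.mem_univ k)) (le_max_right _ _)
  have hpadT : ∀ k, ∃ (c' b' : Fin L0 → ℝ) (w' : Fin L0 → Fin d → ℝ), ∀ z,
      ∑ i : Fin L0, c' i * σ (w' i ⬝ᵥ z + b' i) = T k z := by
    intro k
    obtain ⟨c', b', w', hcw⟩ := netFn_pad σ (hLle k) (βt k) (bt k) (wt k)
    exact ⟨c', b', w', fun z => by rw [hcw z, ← hTeq k z]⟩
  choose βp bp wp hTp using hpadT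
  -- flatten index pairs
  set p : ℕ := mm * L0 with hpdef
  have hp : 1 ≤ p := Nat.one_le_iff_ne_zero.mpr (Nat.mul_ne_zero (by omega) (by omega))
  set e : Fin p ≃ Fin mm × Fin L0 := finProdFinEquiv.symm with hedef
  set ω : Fin p → Fin d → ℝ := fun q => wp (e q).1 (e q).2 with hωdef
  set ζf : Fin p → ℝ := fun q => bp (e q).1 (e q).2 with hζdef
  set τ : Fin p → C(K₂, ℝ) := fun q =>
    ⟨fun y => σ (ω q ⬝ᵥ (y : Fin d → ℝ) + ζf q),
      hσcont.comp (((continuous_const.dotProduct continuous_id').add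
        continuous_const).comp continuous_subtype_val)⟩ with hτdef
  set B : Fin p → (Fin r → ℝ) → ℝ := fun q z => Ψ (e q).1 z * βp (e q).1 (e q).2 with hBdef
  have hBcont : ∀ q, Continuous (B q) := fun q => (hΨcont _).mul continuous_const
  -- compact sensor image
  set W : Set (Fin r → ℝ) := S '' V with hWdef
  have hWc : IsCompact W := hV.image hScont
  set M : ℝ := ∑ q, ‖τ q‖ with hMdef
  have hM0 : 0 ≤ M := Finset.sum_nonneg fun q _ => norm_nonneg _
  have hMle : ∀ q, ‖τ q‖ ≤ M := fun q =>
    Finset.single_le_sum (f := fun q => ‖τ q‖) (fun i _ => norm_nonneg _) (Finset.mem_univ q)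
  set εb : ℝ := ε/(8*(M+1)) with hεbdef
  have hεbpos : 0 < εb := by positivity
  -- branch networks
  have hbr : ∀ q, ∃ h, NetFn σ r h ∧ ∀ z : W, |B q (z : Fin r → ℝ) - h (z : Fin r → ℝ)| < εb := by
    intro q
    obtain ⟨h, hn, ha⟩ := mv_universal_approx hσcont hσ W hWc
      ⟨fun z => B q (z : Fin r → ℝ), (hBcont q).comp continuous_subtype_val⟩ εb hεbpos
    exact ⟨h, hn, fun z => ha z⟩
  choose Bn hBnNet hBnApx using hbr
  choose nB cB bB wB hBeq using hBnNet
  set n : ℕ := max 1 (Finset.univ.sup nB) with hndef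
  have hn1 : 1 ≤ n := le_max_left _ _
  have hnle : ∀ q, nB q ≤ n := fun q =>
    le_trans (Finset.le_sup (Finset.mem_univ q)) (le_max_right _ _)
  have hpadB : ∀ q, ∃ (c' b' : Fin n → ℝ) (w' : Fin n → Fin r → ℝ), ∀ z,
      ∑ i : Fin n, c' i * σ (w' i ⬝ᵥ z + b' i) = Bn q z := by
    intro q
    obtain ⟨c', b', w', hcw⟩ := netFn_pad σ (hnle q) (cB q) (bB q) (wB q)
    exact ⟨c', b', w', fun z => by rw [hcw z, ← hBeq q z]⟩
  choose cp bpB wpB hBp using hpadB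
  -- application equations, then make everything opaque
  have hSapp : ∀ (u : C(K₁, ℝ)) j, S u j = u (x j) := fun _ _ => rfl
  have hωapp : ∀ q, ω q = wp (e q).1 (e q).2 := fun _ => rfl
  have hζapp : ∀ q, ζf q = bp (e q).1 (e q).2 := fun _ => rfl
  have hτapp : ∀ q (y : K₂), τ q y = σ (ω q ⬝ᵥ (y : Fin d → ℝ) + ζf q) := fun _ _ => rfl
  have hBapp : ∀ q v, B q v = Ψ (e q).1 v * βp (e q).1 (e q).2 := fun _ _ => rfl
  clear hedef hτdef
  clear_value n εb M W B τ ζf ω e p L0 Ψ c₀ Φ φ S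
  -- final data
  refine ⟨n, p, r, hn1, hp, hr, x, cp, (fun q i => -(bpB q i)), wpB, ζf, ω, fun u y => ?_⟩
  set z : Fin r → ℝ := S (u : C(K₁, ℝ)) with hzdef
  have hzW : z ∈ W := by
    rw [hWdef, hzdef]
    exact Set.mem_image_of_mem S u.2
  -- rewrite the statement's sum
  have hBnform : ∀ q (v : Fin r → ℝ), Bn q v = ∑ i : Fin n, cp q i * σ (wpB q i ⬝ᵥ v + bpB q i) :=
    fun q v => (hBp q v).symm
  have hargs : ∀ q i, (∑ j, wpB q i j * (u : C(K₁, ℝ)) (x j)) - -(bpB q i)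
      = wpB q i ⬝ᵥ z + bpB q i := by
    intro q i
    have hdp : wpB q i ⬝ᵥ z = ∑ j, wpB q i j * z j := rfl
    have hterm : ∀ j : Fin r, wpB q i j * (u : C(K₁, ℝ)) (x j) = wpB q i j * z j := by
      intro j; rw [hzdef, hSapp]
    rw [sub_neg_eq_add, hdp, Finset.sum_congr rfl (fun j _ => hterm j)]
  have hinner : (∑ k, ∑ i, cp k i *
      σ (∑ j, wpB k i j * (u : C(K₁, ℝ)) (x j) - -(bpB k i)) *
      σ (ω k ⬝ᵥ (y : Fin d → ℝ) + ζf k)) = ∑ q, Bn q z * τ q y := by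
    refine Finset.sum_congr rfl fun q _ => ?_
    rw [← Finset.sum_mul, hBnform q z]
    simp only [hargs]
    rw [hτapp]
  rw [hinner]
  -- intermediate sums
  set A : ℝ := G u y with hAdef
  set t1 : ℝ := ∑ k, Ψ k z * (G ⟨uc k, hucV k⟩) y with ht1def
  set t2 : ℝ := ∑ k, Ψ k z * T k (y : Fin d → ℝ) with ht2def
  set t3 : ℝ := ∑ q, B q z * τ q y with ht3def
  have huV : (u : C(K₁, ℝ)) ∈ V := u.2
  -- step 1
  have hs1 : |A - t1| ≤ ε/4 := by
    have hA : A = ∑ k, Ψ k z * A := by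
      rw [← Finset.sum_mul, hΨsum _ huV, one_mul]
    have hdiff : A - t1 = ∑ k, Ψ k z * (A - (G ⟨uc k, hucV k⟩) y) := by
      symm
      calc ∑ k, Ψ k z * (A - (G ⟨uc k, hucV k⟩) y)
          = ∑ k, (Ψ k z * A - Ψ k z * (G ⟨uc k, hucV k⟩) y) :=
            Finset.sum_congr rfl fun k _ => by ring
        _ = (∑ k, Ψ k z * A) - t1 := Finset.sum_sub_distrib _ _
        _ = A - t1 := by rw [← Finset.sum_mul, hΨsum _ huV, one_mul]
    rw [hdiff]
    calc |∑ k, Ψ k z * (A - (G ⟨uc k, hucV k⟩) y)|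
        ≤ ∑ k, |Ψ k z * (A - (G ⟨uc k, hucV k⟩) y)| := Finset.abs_sum_le_sum_abs _ _
      _ ≤ ∑ k, Ψ k z * (ε/4) := by
          apply Finset.sum_le_sum
          intro k _
          rw [abs_mul, abs_of_nonneg (hΨnn k z)]
          by_cases hzero : Ψ k z = 0
          · rw [hzero]; simp
          · apply mul_le_mul_of_nonneg_left _ (hΨnn k z)
            have hd : dist (u : C(K₁, ℝ)) (uc k) < δ := hΨsupp _ huV k hzero
            have hd' : dist u (⟨uc k, hucV k⟩ : V) < δ := by
              rwa [Subtype.dist_eq]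
            have := hGδ hd'
            have happ := ContinuousMap.dist_apply_le_dist (f := G u) (g := G ⟨uc k, hucV k⟩) y
            rw [Real.dist_eq] at happ
            linarith [le_trans happ (le_of_lt this)]
      _ = (∑ k, Ψ k z) * (ε/4) := by rw [Finset.sum_mul]
      _ = ε/4 := by rw [hΨsum _ huV, one_mul]
  -- step 2
  have hs2 : |t1 - t2| ≤ ε/4 := by
    rw [ht1def, ht2def, ← Finset.sum_sub_distrib]
    calc |∑ k, (Ψ k z * (G ⟨uc k, hucV k⟩) y - Ψ k z * T k (y : Fin d → ℝ))|
        ≤ ∑ k, |Ψ k z * ((G ⟨uc k, hucV k⟩) y - T k (y : Fin d → ℝ))| := by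
          apply le_of_eq_of_le ?_ (Finset.abs_sum_le_sum_abs _ _)
          congr 1
          exact Finset.sum_congr rfl fun k _ => by ring
      _ ≤ ∑ k, Ψ k z * (ε/4) := by
          apply Finset.sum_le_sum
          intro k _
          rw [abs_mul, abs_of_nonneg (hΨnn k z)]
          exact mul_le_mul_of_nonneg_left (le_of_lt (hTapx k y)) (hΨnn k z)
      _ = (∑ k, Ψ k z) * (ε/4) := by rw [Finset.sum_mul]
      _ = ε/4 := by rw [hΨsum _ huV, one_mul]
  -- step 3 : t2 = t3
  have hs3 : t2 = t3 := by
    rw [ht2def, ht3def]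
    have hq : ∀ q : Fin p, B q z * τ q y
        = Ψ (e q).1 z * (βp (e q).1 (e q).2 * σ (wp (e q).1 (e q).2 ⬝ᵥ (y : Fin d → ℝ) + bp (e q).1 (e q).2)) := by
      intro q
      rw [hBapp, hτapp q y, hωapp, hζapp]
      ring
    calc ∑ k, Ψ k z * T k (y : Fin d → ℝ)
        = ∑ k, Ψ k z * ∑ l : Fin L0, βp k l * σ (wp k l ⬝ᵥ (y : Fin d → ℝ) + bp k l) := by
          exact Finset.sum_congr rfl fun k _ => by rw [hTp k]
      _ = ∑ k, ∑ l : Fin L0, Ψ k z * (βp k l * σ (wp k l ⬝ᵥ (y : Fin d → ℝ) + bp k l)) := by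
          exact Finset.sum_congr rfl fun k _ => Finset.mul_sum _ _ _
      _ = ∑ pr : Fin mm × Fin L0, Ψ pr.1 z * (βp pr.1 pr.2 * σ (wp pr.1 pr.2 ⬝ᵥ (y : Fin d → ℝ) + bp pr.1 pr.2)) := by
          rw [Fintype.sum_prod_type]
      _ = ∑ q, B q z * τ q y := by
          rw [← Equiv.sum_comp e (fun pr => Ψ pr.1 z * (βp pr.1 pr.2 * σ (wp pr.1 pr.2 ⬝ᵥ (y : Fin d → ℝ) + bp pr.1 pr.2)))]
          exact Finset.sum_congr rfl fun q _ => (hq q).symm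
  -- step 4
  have hs4 : |t3 - ∑ q, Bn q z * τ q y| ≤ ε/8 := by
    rw [ht3def, ← Finset.sum_sub_distrib]
    calc |∑ q, (B q z * τ q y - Bn q z * τ q y)|
        ≤ ∑ q, |(B q z - Bn q z) * τ q y| := by
          apply le_of_eq_of_le ?_ (Finset.abs_sum_le_sum_abs _ _)
          congr 1
          exact Finset.sum_congr rfl fun q _ => by ring
      _ ≤ ∑ q, εb * ‖τ q‖ := by
          apply Finset.sum_le_sum
          intro q _
          rw [abs_mul]
          have h1 : |B q z - Bn q z| < εb := hBnApx q ⟨z, hzW⟩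
          have h2 : |τ q y| ≤ ‖τ q‖ := by
            have := (τ q).norm_coe_le_norm y
            rwa [Real.norm_eq_abs] at this
          exact mul_le_mul (le_of_lt h1) h2 (abs_nonneg _) (le_of_lt hεbpos)
      _ = εb * M := by rw [hMdef, Finset.mul_sum]
      _ ≤ ε/8 := by
          rw [hεbdef]
          rw [div_mul_eq_mul_div]
          rw [div_le_div_iff₀ (by positivity) (by norm_num)]
          nlinarith
  -- combine
  have final : |A - ∑ q, Bn q z * τ q y| ≤ ε/4 + ε/4 + ε/8 := by
    have c1 := abs_sub_le A t1 t2
    have c2 := abs_sub_le A t2 (∑ q, Bn q z * τ q y)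
    rw [hs3] at hs2
    calc |A - ∑ q, Bn q z * τ q y| ≤ |A - t3| + |t3 - ∑ q, Bn q z * τ q y| := abs_sub_le _ _ _
      _ ≤ (|A - t1| + |t1 - t3|) + |t3 - ∑ q, Bn q z * τ q y| := by
          have := abs_sub_le A t1 t3
          linarith
      _ ≤ ε/4 + ε/4 + ε/8 := by linarith
  calc |A - ∑ q, Bn q z * τ q y| ≤ ε/4 + ε/4 + ε/8 := final
    _ < ε := by linarith
end

section
/- (Dot-product DeepONet corollary) Let E be a Banach space, K₁ ⊆ E and K₂ ⊂ ℝ^d compact, V ⊆ C(K₁, ℝ) compact, G : V → C(K₂, ℝ) continuous, and σ a continuous Tauber–Wiener function. Then for every ε > 0 there exist r, p ≥ 1, points x₁, …, x_r ∈ K₁, and continuous maps ℬ : ℝ^r → ℝ^p and 𝒯 : ℝ^d → ℝ^p such that |G(u)(y) − ⟨ℬ(u(x₁), …, u(x_r)), 𝒯(y)⟩| < ε for all u ∈ V and y ∈ K₂. -/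
open Matrix

/-- Dot-product DeepONet corollary: continuous branch and trunk maps whose Euclidean
inner product uniformly approximates the operator `G` through finitely many sensor
values `u(x₁), …, u(x_r)`. -/
theorem deeponet_dot_product_corollary
    {E : Type*} [NormedAddCommGroup E] [NormedSpace ℝ E]
    {d : ℕ} (K₁ : Set E) [CompactSpace K₁] [Nonempty K₁] (hK₁ : IsCompact K₁)
    (K₂ : Set (Fin d → ℝ)) [CompactSpace K₂] (hK₂ : IsCompact K₂)
    (V : Set C(K₁, ℝ)) (hV : IsCompact V)
    (G : V → C(K₂, ℝ)) (hG : Continuous G)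
    (σ : ℝ → ℝ) (hσcont : Continuous σ) (hσ : TauberWiener σ)
    (ε : ℝ) (hε : 0 < ε) :
    ∃ (r p : ℕ), 1 ≤ r ∧ 1 ≤ p ∧
      ∃ (x : Fin r → K₁) (ℬ : (Fin r → ℝ) → Fin p → ℝ) (𝒯 : (Fin d → ℝ) → Fin p → ℝ),
        Continuous ℬ ∧ Continuous 𝒯 ∧
        ∀ (u : V) (y : K₂),
          |G u y - ℬ (fun j => (u : C(K₁, ℝ)) (x j)) ⬝ᵥ 𝒯 (y : Fin d → ℝ)| < ε := by
  classical
  rcases V.eq_empty_or_nonempty with hVe | hVne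
  · refine ⟨1, 1, le_rfl, le_rfl, fun _ => Classical.arbitrary _, fun _ _ => 0, fun _ _ => 0,
      continuous_const, continuous_const, ?_⟩
    intro u
    exact absurd u.2 (by simp [hVe])
  · haveI : CompactSpace V := isCompact_iff_compactSpace.mp hV
    haveI : Nonempty V := hVne.to_subtype
    have hGu : UniformContinuous G := CompactSpace.uniformContinuous_of_continuous hG
    obtain ⟨δ, hδ, hδG⟩ := Metric.uniformContinuous_iff.mp hGu (ε / 3) (by positivity)
    set η := δ / 8 with hηdef
    have hη0 : 0 < η := by positivity
    -- finite η-net of V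
    obtain ⟨t, ht⟩ := hV.elim_finite_subcover (fun v : V => Metric.ball (v : C(K₁, ℝ)) η)
      (fun v => Metric.isOpen_ball)
      (fun f hf => Set.mem_iUnion.mpr ⟨⟨f, hf⟩, Metric.mem_ball_self hη0⟩)
    have htne : t.Nonempty := by
      rcases hVne with ⟨f, hf⟩
      rcases Set.mem_iUnion₂.mp (ht hf) with ⟨v, hv, _⟩
      exact ⟨v, hv⟩
    have hnet : ∀ u : V, ∃ v ∈ t, dist (u : C(K₁, ℝ)) (v : C(K₁, ℝ)) < η := by
      intro u
      rcases Set.mem_iUnion₂.mp (ht u.2) with ⟨v, hv, hd⟩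
      exact ⟨v, hv, by simpa [Metric.mem_ball] using hd⟩
    -- sensor neighbourhoods
    set W : K₁ → Set K₁ :=
      fun x => {x' | ∀ v ∈ t, dist ((v : C(K₁, ℝ)) x') ((v : C(K₁, ℝ)) x) < η} with hWdef
    have hWopen : ∀ x, IsOpen (W x) := by
      intro x
      have hW : W x = ⋂ v ∈ t, {x' | dist ((v : C(K₁, ℝ)) x') ((v : C(K₁, ℝ)) x) < η} := by
        ext x'; simp [hWdef]
      rw [hW]
      exact isOpen_biInter_finset fun v _ =>
        isOpen_lt (Continuous.dist (v : C(K₁, ℝ)).continuous continuous_const) continuous_const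
    have hWmem : ∀ x, x ∈ W x := fun x v _ => by simpa using hη0
    obtain ⟨s, hs⟩ := isCompact_univ.elim_finite_subcover W hWopen
      (fun x _ => Set.mem_iUnion.mpr ⟨x, hWmem x⟩)
    have hsne : s.Nonempty := by
      obtain ⟨x⟩ := (inferInstance : Nonempty K₁)
      rcases Set.mem_iUnion₂.mp (hs (Set.mem_univ x)) with ⟨c, hc, _⟩
      exact ⟨c, hc⟩
    refine ⟨s.card, t.card, hsne.card_pos, htne.card_pos, ?_⟩
    set c : Fin s.card → K₁ := fun j => (s.equivFin.symm j : K₁) with hcdef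
    have hcover : ∀ x' : K₁, ∃ j, x' ∈ W (c j) := by
      intro x'
      rcases Set.mem_iUnion₂.mp (hs (Set.mem_univ x')) with ⟨x, hx, hx'⟩
      refine ⟨s.equivFin ⟨x, hx⟩, ?_⟩
      simpa [hcdef] using hx'
    -- oscillation estimate on V
    have hosc : ∀ u : V, ∀ x' : K₁, ∀ j, x' ∈ W (c j) →
        dist ((u : C(K₁, ℝ)) x') ((u : C(K₁, ℝ)) (c j)) ≤ 3 * η := by
      intro u x' j hx'
      obtain ⟨v, hv, hd⟩ := hnet u
      have h1 : dist ((u : C(K₁, ℝ)) x') ((v : C(K₁, ℝ)) x') ≤ dist (u : C(K₁, ℝ)) (v : C(K₁, ℝ)) :=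
        ContinuousMap.dist_apply_le_dist _
      have h2 : dist ((v : C(K₁, ℝ)) x') ((v : C(K₁, ℝ)) (c j)) < η := hx' v hv
      have h3 : dist ((v : C(K₁, ℝ)) (c j)) ((u : C(K₁, ℝ)) (c j)) ≤
          dist (u : C(K₁, ℝ)) (v : C(K₁, ℝ)) := by
        rw [dist_comm]
        exact ContinuousMap.dist_apply_le_dist _
      calc dist ((u : C(K₁, ℝ)) x') ((u : C(K₁, ℝ)) (c j))
          ≤ dist ((u : C(K₁, ℝ)) x') ((v : C(K₁, ℝ)) x')
            + dist ((v : C(K₁, ℝ)) x') ((v : C(K₁, ℝ)) (c j))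
            + dist ((v : C(K₁, ℝ)) (c j)) ((u : C(K₁, ℝ)) (c j)) := dist_triangle4 _ _ _ _
        _ ≤ 3 * η := by linarith
    -- sensor values determine V-elements up to δ
    have hkey : ∀ u w : V,
        (∀ j, dist ((u : C(K₁, ℝ)) (c j)) ((w : C(K₁, ℝ)) (c j)) < η) → dist u w < δ := by
      intro u w h
      have hle : dist (u : C(K₁, ℝ)) (w : C(K₁, ℝ)) ≤ 7 * η := by
        rw [ContinuousMap.dist_le (by positivity)]
        intro x'
        obtain ⟨j, hj⟩ := hcover x'
        have h1 := hosc u x' j hj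
        have h2 := h j
        have h3 := hosc w x' j hj
        calc dist ((u : C(K₁, ℝ)) x') ((w : C(K₁, ℝ)) x')
            ≤ dist ((u : C(K₁, ℝ)) x') ((u : C(K₁, ℝ)) (c j))
              + dist ((u : C(K₁, ℝ)) (c j)) ((w : C(K₁, ℝ)) (c j))
              + dist ((w : C(K₁, ℝ)) (c j)) ((w : C(K₁, ℝ)) x') := dist_triangle4 _ _ _ _
          _ ≤ 7 * η := by rw [dist_comm ((w : C(K₁, ℝ)) (c j)) ((w : C(K₁, ℝ)) x')]; linarith
      have : dist u w ≤ 7 * η := by rwa [Subtype.dist_eq]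
      have h8 : δ = 8 * η := by rw [hηdef]; ring
      linarith
    -- net points indexed by Fin t.card
    set vk : Fin t.card → V := fun k => (t.equivFin.symm k : V) with hvkdef
    set Φ : C(K₁, ℝ) → Fin s.card → ℝ := fun f j => f (c j) with hΦdef
    set ψ : Fin t.card → (Fin s.card → ℝ) → ℝ :=
      fun k a => max 0 (η - dist a (Φ ((vk k : V) : C(K₁, ℝ)))) with hψdef
    have hψcont : ∀ k, Continuous (ψ k) := fun k =>
      continuous_const.max (continuous_const.sub (Continuous.dist continuous_id continuous_const))
    have hψnonneg : ∀ k a, 0 ≤ ψ k a := fun k a => le_max_left _ _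
    set S : (Fin s.card → ℝ) → ℝ := fun a => ∑ k, ψ k a with hSdef
    have hScont : Continuous S := continuous_finset_sum _ fun k _ => hψcont k
    have hSpos : ∀ u : V, 0 < S (Φ (u : C(K₁, ℝ))) := by
      intro u
      obtain ⟨v, hv, hd⟩ := hnet u
      set k := t.equivFin ⟨v, hv⟩ with hkdef
      have hvk : ((vk k : V) : C(K₁, ℝ)) = (v : C(K₁, ℝ)) := by
        simp [hvkdef, hkdef]
      have hΦd : dist (Φ (u : C(K₁, ℝ))) (Φ ((vk k : V) : C(K₁, ℝ))) < η := by
        rw [hvk]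
        refine lt_of_le_of_lt ((dist_pi_le_iff dist_nonneg).mpr fun j => ?_) hd
        exact ContinuousMap.dist_apply_le_dist _
      have hψk : 0 < ψ k (Φ (u : C(K₁, ℝ))) :=
        lt_max_iff.mpr (Or.inr (by linarith))
      exact lt_of_lt_of_le hψk
        (Finset.single_le_sum (fun k _ => hψnonneg k _) (Finset.mem_univ k))
    have hΦV : Continuous fun u : V => Φ (u : C(K₁, ℝ)) :=
      continuous_pi fun j =>
        (continuous_eval_const (c j)).comp continuous_subtype_val
    obtain ⟨u₀, -, hu₀⟩ := isCompact_univ.exists_isMinOn Set.univ_nonempty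
      ((hScont.comp hΦV).continuousOn)
    set m := S (Φ ((u₀ : V) : C(K₁, ℝ))) with hmdef
    have hm : 0 < m := hSpos u₀
    have hmle : ∀ u : V, m ≤ S (Φ (u : C(K₁, ℝ))) := fun u =>
      isMinOn_iff.mp hu₀ u (Set.mem_univ u)
    set ℬ : (Fin s.card → ℝ) → Fin t.card → ℝ := fun a k => ψ k a / max (S a) m with hBdef
    have hden : ∀ a, 0 < max (S a) m := fun a => lt_max_of_lt_right hm
    have hBcont : Continuous ℬ := continuous_pi fun k =>
      (hψcont k).div (hScont.max continuous_const) fun a => ne_of_gt (hden a)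
    have hBnonneg : ∀ a k, 0 ≤ ℬ a k := fun a k =>
      div_nonneg (hψnonneg k a) (le_of_lt (hden a))
    -- Tietze extensions of the net images
    have hTietze : ∀ k : Fin t.card, ∃ g : C(Fin d → ℝ, ℝ), g.restrict K₂ = G (vk k) := fun k =>
      ContinuousMap.exists_restrict_eq hK₂.isClosed (G (vk k))
    choose g hg using hTietze
    have hgval : ∀ k (y : K₂), g k (y : Fin d → ℝ) = G (vk k) y := by
      intro k y
      have := DFunLike.congr_fun (hg k) y
      simpa [ContinuousMap.restrict_apply] using this
    refine ⟨c, ℬ, fun y k => g k y, hBcont, continuous_pi fun k => (g k).continuous, ?_⟩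
    intro u y
    have hmax : max (S (Φ (u : C(K₁, ℝ)))) m = S (Φ (u : C(K₁, ℝ))) := max_eq_left (hmle u)
    have hsum1 : ∑ k, ℬ (Φ (u : C(K₁, ℝ))) k = 1 := by
      simp only [hBdef, hmax]
      rw [← Finset.sum_div]
      exact div_self (ne_of_gt (hSpos u))
    have hterm : ∀ k, ℬ (Φ (u : C(K₁, ℝ))) k * |G u y - g k (y : Fin d → ℝ)| ≤
        ℬ (Φ (u : C(K₁, ℝ))) k * (ε / 3) := by
      intro k
      rcases (hψnonneg k (Φ (u : C(K₁, ℝ)))).eq_or_lt with h0 | hpos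
      · have hB0 : ℬ (Φ (u : C(K₁, ℝ))) k = 0 := by
          simp [hBdef, ← h0]
        simp [hB0]
      · have hdist : dist (Φ (u : C(K₁, ℝ))) (Φ ((vk k : V) : C(K₁, ℝ))) < η := by
          rcases lt_max_iff.mp hpos with h | h
          · exact absurd h (lt_irrefl 0)
          · linarith
        have hδd : dist u (vk k) < δ :=
          hkey u (vk k) fun j => (dist_pi_lt_iff hη0).mp hdist j
        have hGd : dist (G u) (G (vk k)) < ε / 3 := hδG hδd
        have habs : |G u y - g k (y : Fin d → ℝ)| ≤ ε / 3 := by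
          rw [hgval k y, ← Real.dist_eq]
          exact le_of_lt (lt_of_le_of_lt (ContinuousMap.dist_apply_le_dist y) hGd)
        exact mul_le_mul_of_nonneg_left habs (hBnonneg _ k)
    have hrw : G u y - ℬ (Φ (u : C(K₁, ℝ))) ⬝ᵥ (fun k => g k (y : Fin d → ℝ)) =
        ∑ k, ℬ (Φ (u : C(K₁, ℝ))) k * (G u y - g k (y : Fin d → ℝ)) := by
      simp only [dotProduct, mul_sub, Finset.sum_sub_distrib, ← Finset.sum_mul, hsum1, one_mul]
    calc |G u y - ℬ (fun j => (u : C(K₁, ℝ)) (c j)) ⬝ᵥ (fun k => g k (y : Fin d → ℝ))|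
        = |∑ k, ℬ (Φ (u : C(K₁, ℝ))) k * (G u y - g k (y : Fin d → ℝ))| := by rw [← hrw]
      _ ≤ ∑ k, |ℬ (Φ (u : C(K₁, ℝ))) k * (G u y - g k (y : Fin d → ℝ))| :=
          Finset.abs_sum_le_sum_abs _ _
      _ = ∑ k, ℬ (Φ (u : C(K₁, ℝ))) k * |G u y - g k (y : Fin d → ℝ)| := by
          refine Finset.sum_congr rfl fun k _ => ?_
          rw [abs_mul, abs_of_nonneg (hBnonneg _ k)]
      _ ≤ ∑ k, ℬ (Φ (u : C(K₁, ℝ))) k * (ε / 3) := Finset.sum_le_sum fun k _ => hterm k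
      _ = ε / 3 := by rw [← Finset.sum_mul, hsum1, one_mul]
      _ < ε := by linarith
end
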